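/- arXiv:1803.07185 — 5 statements merged into one kernel-verified Lean document; each statement's English description precedes it below -/
import Mathlib

section
/- For all positive integers A and B, the number of pairs (x, y) ∈ {1, …, A} × {⌊B/2⌋+1, …, B} with gcd(x, y) = 1 is at least A·B/25. -/
open Finset


lemma count_dvd_Ioc (p a n : ℕ) (h : a ≤ n) :
    ((Finset.Ioc a n).filter (fun x => p ∣ x)).card = n / p - a / p := by
  have key : ((Finset.Ioc 0 a).filter (fun x => p ∣ x)).card
      + ((Finset.Ioc a n).filter (fun x => p ∣ x)).card
      = ((Finset.Ioc 0 n).filter (fun x => p ∣ x)).card := by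
    rw [← Finset.card_union_of_disjoint
        (Finset.disjoint_filter_filter (by
          rw [Finset.disjoint_left]; intro x hx hx'
          simp only [Finset.mem_Ioc] at hx hx'; omega)),
      ← Finset.filter_union, Finset.Ioc_union_Ioc_eq_Ioc (Nat.zero_le a) h]
  rw [Nat.Ioc_filter_dvd_card_eq_div, Nat.Ioc_filter_dvd_card_eq_div] at key
  omega

lemma tele (a : ℕ) (ha : 2 ≤ a) (n : ℕ) (hn : a - 1 ≤ n) :
    (∑ k ∈ Finset.Icc a n, (1:ℝ)/(k:ℝ)^2) ≤ 1/((a:ℝ)-1) - 1/(n:ℝ) := by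
  induction n, hn using Nat.le_induction with
  | base =>
    rw [Finset.Icc_eq_empty (by omega)]
    have : ((a - 1 : ℕ) : ℝ) = (a:ℝ) - 1 := by
      push_cast [Nat.cast_sub (by omega : 1 ≤ a)]; ring
    simp [this]
  | succ n hn ih =>
    rw [Finset.sum_Icc_succ_top (by omega : a ≤ n + 1)]
    have hn1 : 1 ≤ n := by omega
    have hnR : (1:ℝ) ≤ (n:ℝ) := by exact_mod_cast hn1
    have hstep : (1:ℝ)/((n:ℝ)+1)^2 ≤ 1/(n:ℝ) - 1/((n:ℝ)+1) := by
      rw [div_sub_div _ _ (by positivity) (by positivity)]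
      rw [div_le_div_iff₀ (by positivity) (by positivity)]
      ring_nf
      nlinarith
    push_cast
    linarith

lemma tele10 (n : ℕ) : (∑ k ∈ Finset.Icc 11 n, (1:ℝ)/(k:ℝ)^2) ≤ 1/10 := by
  rcases le_or_gt 11 n with h | h
  · have := tele 11 (by norm_num) n (by omega)
    have hn : (0:ℝ) < (n:ℝ) := by exact_mod_cast (by omega : 0 < n)
    have h10 : (1:ℝ)/((11:ℝ)-1) = 1/10 := by norm_num
    have hpos : (0:ℝ) ≤ 1/(n:ℝ) := by positivity
    push_cast at this
    linarith
  · rw [Finset.Icc_eq_empty (by omega)]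
    norm_num

theorem stmt_small (A B : ℕ) (hA : 1 ≤ A) (hB : 1 ≤ B) (hB22 : B ≤ 22) :
    ((A : ℝ) * B) / 25 ≤
      ((((Finset.Icc 1 A) ×ˢ (Finset.Icc (B / 2 + 1) B)).filter
        (fun p => Nat.gcd p.1 p.2 = 1)).card : ℝ) := by
  set b := B / 2 with hb
  rcases eq_or_lt_of_le hB with h1 | hB2
  · -- B = 1
    have hB1 : B = 1 := h1.symm
    subst hB1
    have : ((Finset.Icc 1 A) ×ˢ (Finset.Icc (1 / 2 + 1) 1)).filter
        (fun p => Nat.gcd p.1 p.2 = 1) = (Finset.Icc 1 A) ×ˢ (Finset.Icc (1 / 2 + 1) 1) := by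
      apply Finset.filter_true_of_mem
      intro q hq
      have := (Finset.mem_product.mp hq).2
      simp only [Finset.mem_Icc] at this
      have : q.2 = 1 := by omega
      rw [this]
      exact Nat.gcd_one_right _
    rw [this, Finset.card_product]
    simp only [Nat.card_Icc]
    push_cast
    norm_num
    nlinarith [hA, (by exact_mod_cast hA : (1:ℝ) ≤ (A:ℝ))]
  · -- 2 ≤ B : Bertrand
    obtain ⟨p, hp, hlt, hle⟩ := Nat.exists_prime_lt_and_le_two_mul b (by omega)
    have hpmem : p ∈ Finset.Icc (b + 1) B := by rw [Finset.mem_Icc]; omega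
    set S := (Finset.Icc 1 A).filter (fun x => ¬ p ∣ x) with hS
    have himg : S.image (fun x => (x, p)) ⊆
        ((Finset.Icc 1 A) ×ˢ (Finset.Icc (b + 1) B)).filter
          (fun q => Nat.gcd q.1 q.2 = 1) := by
      intro q hq
      simp only [Finset.mem_image] at hq
      obtain ⟨x, hx, rfl⟩ := hq
      rw [hS, Finset.mem_filter] at hx
      rw [Finset.mem_filter, Finset.mem_product]
      exact ⟨⟨hx.1, hpmem⟩,
        Nat.coprime_comm.mp ((Nat.Prime.coprime_iff_not_dvd hp).mpr hx.2)⟩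
    have hinj : Function.Injective (fun x : ℕ => (x, p)) := by
      intro a b hab; simpa using hab
    have hcard1 : S.card = A - A / p := by
      have hsplit := Finset.card_filter_add_card_filter_not
        (s := Finset.Icc 1 A) (p := fun x => p ∣ x)
      have : ((Finset.Icc 1 A).filter (fun x => p ∣ x)).card = A / p := by
        have : Finset.Icc 1 A = Finset.Ioc 0 A := rfl
        rw [this, count_dvd_Ioc p 0 A (Nat.zero_le A)]
        simp
      rw [this] at hsplit
      have hcA : (Finset.Icc 1 A).card = A := by rw [Nat.card_Icc]; omega
      rw [hcA] at hsplit
      rw [hS]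
      omega
    have hle' : (A:ℝ) * B / 25 ≤ (S.card : ℝ) := by
      rw [hcard1]
      have hdivle : A / p ≤ A := Nat.div_le_self A p
      have hcast : ((A - A / p : ℕ) : ℝ) = (A:ℝ) - ((A / p : ℕ) : ℝ) := by
        push_cast [Nat.cast_sub hdivle]; ring
      rw [hcast]
      have h2 : ((A / p : ℕ) : ℝ) ≤ (A:ℝ) / (p:ℝ) := Nat.cast_div_le
      have hpB : (p:ℝ) ≥ ((B:ℝ) + 1) / 2 := by
        have : 2 * p ≥ B + 1 := by omega
        have := (by exact_mod_cast this : (2:ℝ) * (p:ℝ) ≥ (B:ℝ) + 1)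
        linarith
      have hppos : (0:ℝ) < p := by exact_mod_cast hp.pos
      have hBr : (2:ℝ) ≤ (B:ℝ) := by exact_mod_cast hB2
      have hB22r : (B:ℝ) ≤ 22 := by exact_mod_cast hB22
      have hAr : (1:ℝ) ≤ (A:ℝ) := by exact_mod_cast hA
      -- need A*B/25 ≤ A - A/p, given p ≥ (B+1)/2, 2 ≤ B ≤ 22
      have key : (B:ℝ) * (p:ℝ) ≤ 25 * (p:ℝ) - 25 := by
        nlinarith [sq_nonneg ((B:ℝ) - 12)]
      have hA0 : (0:ℝ) ≤ (A:ℝ) := by positivity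
      have h2' : ((A / p : ℕ) : ℝ) * (p:ℝ) ≤ (A:ℝ) := by
        rw [← le_div_iff₀ hppos]; exact h2
      rw [div_le_iff₀ (by norm_num : (0:ℝ) < 25)]
      nlinarith [mul_le_mul_of_nonneg_left key hA0, h2', hppos]
    have hcards : S.card ≤ (((Finset.Icc 1 A) ×ˢ (Finset.Icc (b + 1) B)).filter
        (fun q => Nat.gcd q.1 q.2 = 1)).card := by
      calc S.card = (S.image (fun x => (x, p))).card :=
            (Finset.card_image_of_injective S hinj).symm
        _ ≤ _ := Finset.card_le_card himg
    exact hle'.trans (by exact_mod_cast hcards)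

theorem stmt_large (A B : ℕ) (hA : 1 ≤ A) (hB23 : 23 ≤ B) :
    ((A : ℝ) * B) / 25 ≤
      ((((Finset.Icc 1 A) ×ˢ (Finset.Icc (B / 2 + 1) B)).filter
        (fun p => Nat.gcd p.1 p.2 = 1)).card : ℝ) := by
  set b := B / 2 with hb
  set l := B - b with hl
  set X := Finset.Icc 1 A with hX
  set Y := Finset.Icc (b + 1) B with hY
  set T := X ×ˢ Y with hT
  set G := T.filter (fun q => Nat.gcd q.1 q.2 = 1) with hG
  set Bad := T.filter (fun q => ¬ Nat.gcd q.1 q.2 = 1) with hBad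
  set P := Nat.primesBelow (B + 1) with hP
  have hcardT : T.card = A * l := by
    rw [hT, Finset.card_product, hX, hY, Nat.card_Icc, Nat.card_Icc]
    congr 1 <;> omega
  have hsplit : G.card + Bad.card = A * l := by
    rw [← hcardT, hG, hBad]
    exact Finset.card_filter_add_card_filter_not _
  -- Bad is covered by prime-divisibility sets
  have hcover : Bad ⊆ P.biUnion (fun p =>
      (X.filter (fun x => p ∣ x)) ×ˢ (Y.filter (fun y => p ∣ y))) := by
    intro q hq
    rw [hBad, Finset.mem_filter] at hq
    obtain ⟨hqT, hg⟩ := hq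
    rw [hT, Finset.mem_product] at hqT
    have hy1 : 1 ≤ q.2 := by
      have := hqT.2; rw [hY, Finset.mem_Icc] at this; omega
    set g := Nat.gcd q.1 q.2 with hgdef
    have hgne : g ≠ 1 := hg
    set p := g.minFac with hpdef
    have hpp : p.Prime := Nat.minFac_prime hgne
    have hpx : p ∣ q.1 := (Nat.minFac_dvd g).trans (Nat.gcd_dvd_left _ _)
    have hpy : p ∣ q.2 := (Nat.minFac_dvd g).trans (Nat.gcd_dvd_right _ _)
    have hpB : p ≤ B := by
      have h1 : p ≤ q.2 := Nat.le_of_dvd (by omega) hpy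
      have h2 : q.2 ≤ B := by
        have := hqT.2; rw [hY, Finset.mem_Icc] at this; omega
      omega
    rw [Finset.mem_biUnion]
    refine ⟨p, ?_, ?_⟩
    · rw [hP]; exact Nat.mem_primesBelow.mpr ⟨by omega, hpp⟩
    · rw [Finset.mem_product]
      exact ⟨Finset.mem_filter.mpr ⟨hqT.1, hpx⟩, Finset.mem_filter.mpr ⟨hqT.2, hpy⟩⟩
  have hbadle : Bad.card ≤ ∑ p ∈ P, (A / p) * (B / p - b / p) := by
    calc Bad.card ≤ (P.biUnion (fun p =>
        (X.filter (fun x => p ∣ x)) ×ˢ (Y.filter (fun y => p ∣ y)))).card :=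
          Finset.card_le_card hcover
      _ ≤ ∑ p ∈ P, ((X.filter (fun x => p ∣ x)) ×ˢ (Y.filter (fun y => p ∣ y))).card :=
          Finset.card_biUnion_le
      _ = ∑ p ∈ P, (A / p) * (B / p - b / p) := by
          apply Finset.sum_congr rfl
          intro p hp
          rw [Finset.card_product]
          congr 1
          · rw [hX]
            have : Finset.Icc 1 A = Finset.Ioc 0 A := rfl
            rw [this, count_dvd_Ioc p 0 A (Nat.zero_le A)]
            simp
          · rw [hY, show Finset.Icc (b+1) B = Finset.Ioc b B from Finset.Icc_add_one_left_eq_Ioc b B,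
              count_dvd_Ioc p b B (by omega)]
  -- real bound on each term
  have hterm : ∀ p ∈ P, ((A / p * (B / p - b / p) : ℕ) : ℝ) ≤
      (A:ℝ) * l / (p:ℝ)^2 + (A:ℝ) / (p:ℝ) := by
    intro p hp
    have hpp : p.Prime := Nat.prime_of_mem_primesBelow hp
    have hp0 : 0 < p := hpp.pos
    have hppos : (0:ℝ) < (p:ℝ) := by exact_mod_cast hp0
    have hMnat : B / p - b / p ≤ l / p + 1 := by
      have hBeq : B = b + l := by omega
      have hb' : b < p * (b / p) + p := by
        have h1 := Nat.div_add_mod b p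
        have h2 := Nat.mod_lt b hp0
        omega
      have hl' : l < p * (l / p) + p := by
        have h1 := Nat.div_add_mod l p
        have h2 := Nat.mod_lt l hp0
        omega
      have hlt : B / p < b / p + l / p + 2 := by
        rw [Nat.div_lt_iff_lt_mul hp0, hBeq]
        have expand : (b / p + l / p + 2) * p = p * (b / p) + p * (l / p) + 2 * p := by
          ring
        rw [expand]
        omega
      have h2' : B / p ≤ b / p + l / p + 1 := Nat.lt_succ_iff.mp hlt
      have heq : b / p + l / p + 1 = (l / p + 1) + b / p := by ring
      exact Nat.sub_le_iff_le_add.mpr (heq ▸ h2')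
    have h1 : ((A / p : ℕ) : ℝ) ≤ (A:ℝ) / (p:ℝ) := Nat.cast_div_le
    have h2 : ((B / p - b / p : ℕ) : ℝ) ≤ (l:ℝ) / (p:ℝ) + 1 := by
      calc ((B / p - b / p : ℕ) : ℝ) ≤ ((l / p + 1 : ℕ) : ℝ) := by exact_mod_cast hMnat
        _ ≤ (l:ℝ) / (p:ℝ) + 1 := by
            push_cast
            have : ((l / p : ℕ) : ℝ) ≤ (l:ℝ) / (p:ℝ) := Nat.cast_div_le
            linarith
    calc ((A / p * (B / p - b / p) : ℕ) : ℝ)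
        = ((A / p : ℕ) : ℝ) * ((B / p - b / p : ℕ) : ℝ) := by push_cast; ring
      _ ≤ ((A:ℝ) / (p:ℝ)) * ((l:ℝ) / (p:ℝ) + 1) := by
          apply mul_le_mul h1 h2 (by positivity) (by positivity)
      _ = (A:ℝ) * l / (p:ℝ)^2 + (A:ℝ) / (p:ℝ) := by
          field_simp
  -- sum bounds
  have h4 : Nat.primesBelow 11 = {2, 3, 5, 7} := by decide
  have hsub1 : P.filter (fun p => p < 11) ⊆ ({2, 3, 5, 7} : Finset ℕ) := by
    intro p hp
    rw [Finset.mem_filter] at hp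
    have hpp := Nat.prime_of_mem_primesBelow (hP ▸ hp.1)
    rw [← h4]
    exact Nat.mem_primesBelow.mpr ⟨hp.2, hpp⟩
  have hsub2 : P.filter (fun p => ¬ p < 11) ⊆ Finset.Icc 11 B := by
    intro p hp
    rw [Finset.mem_filter] at hp
    have := Nat.lt_of_mem_primesBelow (hP ▸ hp.1)
    rw [Finset.mem_Icc]
    omega
  have hS2 : (∑ p ∈ P, (1:ℝ) / (p:ℝ)^2) ≤ 22999 / 44100 := by
    rw [← Finset.sum_filter_add_sum_filter_not P (fun p => p < 11)]
    have hsmall : ∑ p ∈ P.filter (fun p => p < 11), (1:ℝ)/(p:ℝ)^2 ≤ 18589 / 44100 := by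
      refine le_trans (Finset.sum_le_sum_of_subset_of_nonneg hsub1
        (fun i _ _ => by positivity)) ?_
      norm_num [Finset.sum_insert, Finset.mem_insert]
    have htail : ∑ p ∈ P.filter (fun p => ¬ p < 11), (1:ℝ)/(p:ℝ)^2 ≤ 1/10 := by
      refine le_trans (Finset.sum_le_sum_of_subset_of_nonneg hsub2
        (fun i _ _ => by positivity)) (tele10 B)
    linarith
  have hS1 : (∑ p ∈ P, (1:ℝ) / (p:ℝ)) ≤ 247 / 210 + ((B:ℝ) + 1) / 11 := by
    rw [← Finset.sum_filter_add_sum_filter_not P (fun p => p < 11)]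
    have hsmall : ∑ p ∈ P.filter (fun p => p < 11), (1:ℝ)/(p:ℝ) ≤ 247 / 210 := by
      refine le_trans (Finset.sum_le_sum_of_subset_of_nonneg hsub1
        (fun i _ _ => by positivity)) ?_
      norm_num [Finset.sum_insert, Finset.mem_insert]
    have htail : ∑ p ∈ P.filter (fun p => ¬ p < 11), (1:ℝ)/(p:ℝ) ≤ ((B:ℝ) + 1) / 11 := by
      have hcard : (P.filter (fun p => ¬ p < 11)).card ≤ B + 1 := by
        refine le_trans (Finset.card_filter_le _ _) ?_
        rw [hP, Nat.primesBelow]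
        exact le_trans (Finset.card_filter_le _ _) (by simp)
      have hbound : ∀ x ∈ P.filter (fun p => ¬ p < 11), (1:ℝ)/(x:ℝ) ≤ 1/11 := by
        intro x hx
        rw [Finset.mem_filter] at hx
        have h11 : (11:ℝ) ≤ (x:ℝ) := by exact_mod_cast (by omega : 11 ≤ x)
        exact one_div_le_one_div_of_le (by norm_num) h11
      calc ∑ p ∈ P.filter (fun p => ¬ p < 11), (1:ℝ)/(p:ℝ)
          ≤ (P.filter (fun p => ¬ p < 11)).card • ((1:ℝ)/11) :=
            Finset.sum_le_card_nsmul _ _ _ hbound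
        _ = ((P.filter (fun p => ¬ p < 11)).card : ℝ) * (1/11) := by
            rw [nsmul_eq_mul]
        _ ≤ ((B:ℝ) + 1) * (1/11) := by
            have : ((P.filter (fun p => ¬ p < 11)).card : ℝ) ≤ (B:ℝ) + 1 := by
              exact_mod_cast hcard
            linarith
        _ = ((B:ℝ) + 1) / 11 := by ring
    linarith
  -- assemble
  have hbadR : (Bad.card : ℝ) ≤
      (A:ℝ) * l * (∑ p ∈ P, (1:ℝ) / (p:ℝ)^2) + (A:ℝ) * (∑ p ∈ P, (1:ℝ) / (p:ℝ)) := by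
    calc (Bad.card : ℝ) ≤ ((∑ p ∈ P, (A / p) * (B / p - b / p) : ℕ) : ℝ) := by
          exact_mod_cast hbadle
      _ = ∑ p ∈ P, ((A / p * (B / p - b / p) : ℕ) : ℝ) := by push_cast; ring
      _ ≤ ∑ p ∈ P, ((A:ℝ) * l / (p:ℝ)^2 + (A:ℝ) / (p:ℝ)) := Finset.sum_le_sum hterm
      _ = (A:ℝ) * l * (∑ p ∈ P, (1:ℝ) / (p:ℝ)^2) + (A:ℝ) * (∑ p ∈ P, (1:ℝ) / (p:ℝ)) := by
          rw [Finset.sum_add_distrib, Finset.mul_sum, Finset.mul_sum]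
          congr 1 <;> exact Finset.sum_congr rfl (fun p _ => by ring)
  have hGR : (G.card : ℝ) = (A:ℝ) * l - (Bad.card : ℝ) := by
    have : (G.card : ℝ) + (Bad.card : ℝ) = (A:ℝ) * l := by exact_mod_cast hsplit
    linarith
  have hlB : 2 * l ≥ B ∧ l ≤ B := by omega
  have hlR : (B:ℝ) ≤ 2 * (l:ℝ) := by exact_mod_cast hlB.1
  have hBR : (23:ℝ) ≤ (B:ℝ) := by exact_mod_cast hB23
  have hAR : (1:ℝ) ≤ (A:ℝ) := by exact_mod_cast hA
  have hA0 : (0:ℝ) ≤ (A:ℝ) := by linarith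
  have hl0 : (0:ℝ) ≤ (l:ℝ) := by positivity
  have hb1 : (A:ℝ) * l * (∑ p ∈ P, (1:ℝ) / (p:ℝ)^2) ≤ (A:ℝ) * l * (22999 / 44100) :=
    mul_le_mul_of_nonneg_left hS2 (by positivity)
  have hb2 : (A:ℝ) * (∑ p ∈ P, (1:ℝ) / (p:ℝ)) ≤ (A:ℝ) * (247 / 210 + ((B:ℝ) + 1) / 11) :=
    mul_le_mul_of_nonneg_left hS1 hA0
  have hkey : (B:ℝ) / 25 ≤ (l:ℝ) * (21101 / 44100) - (247 / 210 + ((B:ℝ) + 1) / 11) := by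
    nlinarith
  have := mul_le_mul_of_nonneg_left hkey hA0
  show ((A:ℝ) * B) / 25 ≤ (G.card : ℝ)
  rw [hGR]
  nlinarith

/-- For all positive integers `A` and `B`, the number of pairs
`(x, y) ∈ {1, …, A} × {⌊B/2⌋+1, …, B}` with `gcd(x, y) = 1` is at least `A·B/25`. -/
theorem stmt0 (A B : ℕ) (hA : 1 ≤ A) (hB : 1 ≤ B) :
    ((A : ℝ) * B) / 25 ≤
      ((((Finset.Icc 1 A) ×ˢ (Finset.Icc (B / 2 + 1) B)).filter
        (fun p => Nat.gcd p.1 p.2 = 1)).card : ℝ) := by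
  rcases le_or_gt B 22 with h | h
  · exact stmt_small A B hA hB h
  · exact stmt_large A B hA (by omega)
end

section
/- Let ℓ ≥ 3 and n ≥ 1 be integers, and let P ⊆ ℝ² be a finite set of exactly (ℓ−1)·n − ℓ + 2 points such that no ℓ points of P lie on a common line. Then every tree of size n with a distinguished root has a straight-line upward planar drawing f with f(V) ⊆ P. -/
open SimpleGraph

/-- A straight-line planar drawing of a graph `G`: an injective map of vertices to points of
`ℝ²` such that no vertex lies in the interior of (or on) a non-incident edge segment, and any
two distinct edge segments intersect exactly in the images of their common endpoints. -/
def IsStraightLineDrawing {V : Type} (G : SimpleGraph V) (f : V → ℝ × ℝ) : Prop :=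
  Function.Injective f ∧
  (∀ u v w : V, G.Adj u v → w ≠ u → w ≠ v → f w ∉ segment ℝ (f u) (f v)) ∧
  (∀ u v u' v' : V, G.Adj u v → G.Adj u' v' → s(u, v) ≠ s(u', v') →
    segment ℝ (f u) (f v) ∩ segment ℝ (f u') (f v') =
      f '' {w | (w = u ∨ w = v) ∧ (w = u' ∨ w = v')})

/-- A grid drawing of width `W` and height `H`: a straight-line planar drawing with all
vertices on integer grid points of `{1, …, W} × {1, …, H}`. -/
def IsGridDrawing {V : Type} (G : SimpleGraph V) (f : V → ℝ × ℝ) (W H : ℕ) : Prop :=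
  IsStraightLineDrawing G f ∧
  ∀ x : V, ∃ i j : ℤ, 1 ≤ i ∧ i ≤ (W : ℤ) ∧ 1 ≤ j ∧ j ≤ (H : ℤ) ∧ f x = ((i : ℝ), (j : ℝ))

/-- In a tree with distinguished root `r`, `u` is the parent of `v` iff `u` is a neighbor of
`v` lying on the path from `v` to `r` (equivalently, one step closer to the root). -/
def IsParent {V : Type} (G : SimpleGraph V) (r u v : V) : Prop :=
  G.Adj u v ∧ G.dist r u + 1 = G.dist r v

/-- A drawing is upward (w.r.t. root `r`) if every parent is drawn at a `y`-coordinate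
greater than or equal to that of each of its children. -/
def IsUpward {V : Type} (G : SimpleGraph V) (r : V) (f : V → ℝ × ℝ) : Prop :=
  ∀ u v : V, IsParent G r u v → (f v).2 ≤ (f u).2

set_option maxHeartbeats 1000000

noncomputable section AuxGeo

/-- The closed cone with apex `p` spanned by "key" directions in `[s,t]`, pointing downward. -/
def kcone (p : ℝ × ℝ) (s t : ℝ) : Set (ℝ × ℝ) :=
  {z | z.2 ≤ p.2 ∧ s * (p.2 - z.2) ≤ z.1 - p.1 ∧ z.1 - p.1 ≤ t * (p.2 - z.2)}

/-- The angular key of a point strictly below `p`. -/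
def kkey (p z : ℝ × ℝ) : ℝ := (z.1 - p.1) / (p.2 - z.2)

lemma kcone_convex (p : ℝ × ℝ) (s t : ℝ) : Convex ℝ (kcone p s t) := by
  intro x hx y hy a b ha hb hab
  obtain ⟨hx1, hx2, hx3⟩ := hx
  obtain ⟨hy1, hy2, hy3⟩ := hy
  have hb' : b = 1 - a := by linarith
  subst hb'
  have ha1 : a ≤ 1 := by linarith
  have h1 : (a • x + (1-a) • y).1 = a * x.1 + (1-a) * y.1 := rfl
  have h2 : (a • x + (1-a) • y).2 = a * x.2 + (1-a) * y.2 := rfl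
  refine ⟨?_, ?_, ?_⟩ <;> simp only [Set.mem_setOf_eq, h1, h2]
  · nlinarith [mul_le_mul_of_nonneg_left hx1 ha, mul_le_mul_of_nonneg_left hy1 hb]
  · nlinarith [mul_le_mul_of_nonneg_left hx2 ha, mul_le_mul_of_nonneg_left hy2 hb]
  · nlinarith [mul_le_mul_of_nonneg_left hx3 ha, mul_le_mul_of_nonneg_left hy3 hb]

lemma self_mem_kcone (p : ℝ × ℝ) (s t : ℝ) : p ∈ kcone p s t := by
  simp [kcone]

lemma mem_kcone_of_key {p z : ℝ × ℝ} {s t : ℝ} (h2 : z.2 < p.2)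
    (hs : s ≤ kkey p z) (ht : kkey p z ≤ t) : z ∈ kcone p s t := by
  have hpos : 0 < p.2 - z.2 := by linarith
  have hid : kkey p z * (p.2 - z.2) = z.1 - p.1 := div_mul_cancel₀ _ (ne_of_gt hpos)
  refine ⟨le_of_lt h2, ?_, ?_⟩
  · nlinarith [mul_le_mul_of_nonneg_right hs hpos.le]
  · nlinarith [mul_le_mul_of_nonneg_right ht hpos.le]

lemma eq_apex_of_snd_eq {p z : ℝ × ℝ} {s t : ℝ} (hz : z ∈ kcone p s t) (h : z.2 = p.2) :
    z = p := by
  obtain ⟨h1, h2, h3⟩ := hz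
  rw [h, sub_self, mul_zero] at h2 h3
  exact Prod.ext (le_antisymm (by linarith) (by linarith)) h

lemma kcone_inter_subset {p : ℝ × ℝ} {s t s' t' : ℝ} (h : t < s') :
    kcone p s t ∩ kcone p s' t' ⊆ {p} := by
  rintro z ⟨⟨h1, h2, h3⟩, ⟨h1', h2', h3'⟩⟩
  have h4 : s' * (p.2 - z.2) ≤ t * (p.2 - z.2) := le_trans h2' h3
  have h5 : p.2 - z.2 ≤ 0 := by nlinarith
  have hz2 : z.2 = p.2 := le_antisymm h1 (by linarith)
  exact eq_apex_of_snd_eq ⟨h1, h2, h3⟩ hz2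

lemma apex_not_mem_segment {p a b : ℝ × ℝ} {s t : ℝ} (ha : a ∈ kcone p s t)
    (hb : b ∈ kcone p s t) (hna : a ≠ p) (hnb : b ≠ p) : p ∉ segment ℝ a b := by
  rintro ⟨μ, ν, hμ, hν, hμν, heq⟩
  have ha2 : a.2 < p.2 := lt_of_le_of_ne ha.1 (fun h => hna (eq_apex_of_snd_eq ha h))
  have hb2 : b.2 < p.2 := lt_of_le_of_ne hb.1 (fun h => hnb (eq_apex_of_snd_eq hb h))
  have hν' : ν = 1 - μ := by linarith
  subst hν'
  have h2 : μ * a.2 + (1 - μ) * b.2 = p.2 := by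
    have := congrArg Prod.snd heq; simpa using this
  rcases eq_or_lt_of_le hμ with h0 | h0
  · rw [← h0] at h2; nlinarith
  · nlinarith [mul_lt_mul_of_pos_left ha2 h0,
      mul_le_of_le_one_left (sub_pos.2 hb2).le (show μ ≤ 1 by linarith)]

/-- On the segment from the apex `p` down to `q`, every point has second coordinate at
least `q.2`, with equality only at `q`. -/
lemma seg_snd_ge {p q z : ℝ × ℝ} (hq : q.2 < p.2) (hz : z ∈ segment ℝ p q) :
    q.2 ≤ z.2 ∧ (z.2 = q.2 → z = q) := by
  obtain ⟨μ, ν, hμ, hν, hμν, heq⟩ := hz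
  have hν' : ν = 1 - μ := by linarith
  subst hν'
  have h1 : μ * p.1 + (1-μ) * q.1 = z.1 := by have := congrArg Prod.fst heq; simpa using this
  have h2 : μ * p.2 + (1-μ) * q.2 = z.2 := by have := congrArg Prod.snd heq; simpa using this
  constructor
  · nlinarith [mul_nonneg hμ (show (0:ℝ) ≤ p.2 - q.2 by linarith)]
  · intro h
    have hμ0 : μ = 0 := by
      by_contra hne
      have hpos := mul_pos (lt_of_le_of_ne hμ (Ne.symm hne)) (sub_pos.2 hq)
      nlinarith
    rw [hμ0] at h1 h2
    exact Prod.ext (by linarith) h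

/-- Points with a common key are collinear with `p`. -/
lemma collinear_of_kkey_eq {p : ℝ × ℝ} {A : Set (ℝ × ℝ)} {t : ℝ}
    (hA : ∀ z ∈ A, z.2 < p.2 ∧ kkey p z = t) :
    Collinear ℝ (insert p A) := by
  rw [collinear_iff_of_mem (Set.mem_insert p A)]
  refine ⟨(t, -1), ?_⟩
  rintro x (rfl | hx)
  · exact ⟨0, by simp⟩
  · obtain ⟨hx2, hxk⟩ := hA x hx
    have hpos : 0 < p.2 - x.2 := by linarith
    have h1 : x.1 - p.1 = t * (p.2 - x.2) := by
      rw [kkey] at hxk; field_simp at hxk; linarith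
    refine ⟨p.2 - x.2, ?_⟩
    have hc : ((p.2 - x.2) • ((t:ℝ), (-1:ℝ)) +ᵥ p) = ((p.2 - x.2) * t + p.1, (p.2 - x.2) * (-1) + p.2) := rfl
    rw [hc]
    refine Prod.ext ?_ ?_ <;> simp <;> linarith

end AuxGeo

noncomputable section AuxShear

def shear (ε : ℝ) (z : ℝ × ℝ) : ℝ × ℝ := (z.1, z.2 + ε * z.1)

lemma shear_shear (ε : ℝ) (z : ℝ × ℝ) : shear (-ε) (shear ε z) = z :=
  Prod.ext rfl (by show z.2 + ε * z.1 + (-ε) * z.1 = z.2; ring)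

lemma shear_shear' (ε : ℝ) (z : ℝ × ℝ) : shear ε (shear (-ε) z) = z := by
  simpa using shear_shear (-ε) z

lemma shear_injective (ε : ℝ) : Function.Injective (shear ε) := by
  intro a b h
  have := congrArg (shear (-ε)) h
  rwa [shear_shear, shear_shear] at this

lemma shear_linear (ε a b : ℝ) (z w : ℝ × ℝ) :
    shear ε (a • z + b • w) = a • shear ε z + b • shear ε w :=
  Prod.ext rfl (by
    show a * z.2 + b * w.2 + ε * (a * z.1 + b * w.1)
        = a * (z.2 + ε * z.1) + b * (w.2 + ε * w.1)
    ring)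

lemma shear_mem_segment (ε : ℝ) (x y z : ℝ × ℝ) :
    shear ε z ∈ segment ℝ (shear ε x) (shear ε y) ↔ z ∈ segment ℝ x y := by
  constructor
  · rintro ⟨a, b, ha, hb, hab, heq⟩
    refine ⟨a, b, ha, hb, hab, ?_⟩
    apply shear_injective ε
    rw [shear_linear]; exact heq
  · rintro ⟨a, b, ha, hb, hab, heq⟩
    exact ⟨a, b, ha, hb, hab, by rw [← shear_linear, heq]⟩

lemma shear_image_segment (ε : ℝ) (x y : ℝ × ℝ) :
    segment ℝ (shear ε x) (shear ε y) = shear ε '' segment ℝ x y := by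
  ext z
  constructor
  · intro hz
    have hz' : shear ε (shear (-ε) z) = z := shear_shear' ε z
    rw [← hz'] at hz
    exact ⟨_, (shear_mem_segment ε x y _).1 hz, hz'⟩
  · rintro ⟨w, hw, rfl⟩
    exact (shear_mem_segment ε x y w).2 hw

lemma shear_collinear {ε : ℝ} {A : Set (ℝ × ℝ)} (h : Collinear ℝ A) :
    Collinear ℝ (shear ε '' A) := by
  rcases A.eq_empty_or_nonempty with rfl | ⟨a, ha⟩
  · simpa using collinear_empty ℝ (ℝ × ℝ)
  rw [collinear_iff_of_mem ha] at h
  obtain ⟨v, hv⟩ := h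
  rw [collinear_iff_of_mem (Set.mem_image_of_mem _ ha)]
  refine ⟨(v.1, v.2 + ε * v.1), ?_⟩
  rintro x ⟨w, hw, rfl⟩
  obtain ⟨c, hc⟩ := hv w hw
  refine ⟨c, ?_⟩
  rw [hc]
  show shear ε (c • v + a) = c • ((v.1, v.2 + ε * v.1)) + shear ε a
  refine Prod.ext rfl ?_
  show c * v.2 + a.2 + ε * (c * v.1 + a.1) = c * (v.2 + ε * v.1) + (a.2 + ε * a.1)
  ring

/-- Choice of a small positive shear parameter preserving strict
second-coordinate comparisons on a finite set. -/
lemma exists_good_shear (P : Finset (ℝ × ℝ)) :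
    ∃ ε : ℝ, 0 < ε ∧ ∀ a ∈ P, ∀ b ∈ P, a.2 < b.2 → (shear ε a).2 < (shear ε b).2 := by
  classical
  set T : Finset ℝ := ((P ×ˢ P).filter (fun q => q.1.2 < q.2.2)).image
    (fun q => (q.2.2 - q.1.2) / (|q.1.1 - q.2.1| + 1)) with hT
  have hTmem : ∀ a ∈ P, ∀ b ∈ P, a.2 < b.2 → (b.2 - a.2) / (|a.1 - b.1| + 1) ∈ T := by
    intro a ha b hb hab
    rw [hT]
    exact Finset.mem_image.2 ⟨(a, b), Finset.mem_filter.2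
      ⟨Finset.mem_product.2 ⟨ha, hb⟩, hab⟩, rfl⟩
  have hTpos : ∀ x ∈ T, 0 < x := by
    intro x hx
    rw [hT] at hx
    simp only [Finset.mem_image, Finset.mem_filter] at hx
    obtain ⟨q, ⟨_, hq2⟩, rfl⟩ := hx
    exact div_pos (by linarith) (by positivity)
  by_cases hTe : T.Nonempty
  · have hmin : 0 < T.min' hTe := hTpos _ (T.min'_mem hTe)
    refine ⟨min 1 (T.min' hTe / 2), lt_min one_pos (by linarith), ?_⟩
    intro a ha b hb hab
    set ε := min 1 (T.min' hTe / 2) with hε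
    have hεpos : 0 < ε := lt_min one_pos (by linarith)
    have h1 : T.min' hTe ≤ (b.2 - a.2) / (|a.1 - b.1| + 1) := T.min'_le _ (hTmem a ha b hb hab)
    have h5 : ε < (b.2 - a.2) / (|a.1 - b.1| + 1) := by
      have h3 : ε ≤ T.min' hTe / 2 := min_le_right _ _
      linarith
    have h4 : ε * (|a.1 - b.1| + 1) < b.2 - a.2 := by
      calc ε * (|a.1 - b.1| + 1)
          < ((b.2 - a.2) / (|a.1 - b.1| + 1)) * (|a.1 - b.1| + 1) :=
            mul_lt_mul_of_pos_right h5 (by positivity)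
        _ = b.2 - a.2 := div_mul_cancel₀ _ (by positivity)
    have h6 : ε * (a.1 - b.1) ≤ ε * |a.1 - b.1| :=
      mul_le_mul_of_nonneg_left (le_abs_self _) hεpos.le
    show a.2 + ε * a.1 < b.2 + ε * b.1
    nlinarith [abs_nonneg (a.1 - b.1)]
  · refine ⟨1, one_pos, ?_⟩
    intro a ha b hb hab
    exact absurd ⟨_, hTmem a ha b hb hab⟩ hTe

end AuxShear

open scoped Classical
noncomputable section AuxTree

variable {V : Type} [Fintype V] {G : SimpleGraph V}

lemma tree_adj_dist_ne (hG : G.IsTree) (r : V) {u v : V} (h : G.Adj u v) :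
    G.dist r u ≠ G.dist r v := by
  intro heq
  obtain ⟨pu, hpu⟩ := hG.isConnected.exists_walk_length_eq_dist r u
  obtain ⟨pv, hpv⟩ := hG.isConnected.exists_walk_length_eq_dist r v
  have hpu_path : pu.IsPath := pu.isPath_of_length_eq_dist hpu
  have hpv_path : pv.IsPath := pv.isPath_of_length_eq_dist hpv
  have hv_not : v ∉ pu.support := by
    intro hmem
    have h1 : G.dist r v ≤ (pu.takeUntil v hmem).length := SimpleGraph.dist_le _
    have h2 : (pu.takeUntil v hmem).length ≤ pu.length := pu.length_takeUntil_le hmem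
    have h3 : (pu.takeUntil v hmem).length + (pu.dropUntil v hmem).length = pu.length := by
      have := congrArg Walk.length (pu.take_spec hmem)
      rwa [Walk.length_append] at this
    have h4 : (pu.dropUntil v hmem).length = 0 := by omega
    exact h.ne' (Walk.eq_of_length_eq_zero h4)
  have hw1_path : ((Walk.cons h.symm pu.reverse).reverse : G.Walk r v).IsPath := by
    apply Walk.IsPath.reverse
    rw [Walk.cons_isPath_iff]
    refine ⟨hpu_path.reverse, ?_⟩
    rw [Walk.support_reverse]
    simpa using hv_not
  have hlen : ((Walk.cons h.symm pu.reverse).reverse : G.Walk r v).length = G.dist r u + 1 := by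
    rw [Walk.length_reverse, Walk.length_cons, Walk.length_reverse, hpu]
  have := hG.IsAcyclic.path_unique ⟨_, hw1_path⟩ ⟨pv, hpv_path⟩
  have hlen2 := congrArg (fun q : G.Path r v => q.1.length) this
  simp only at hlen2
  rw [hlen, hpv] at hlen2
  omega

lemma tree_adj_dist (hG : G.IsTree) (r : V) {u v : V} (h : G.Adj u v) :
    G.dist r v = G.dist r u + 1 ∨ G.dist r u = G.dist r v + 1 := by
  have h1 : G.dist u v = 1 := SimpleGraph.dist_eq_one_iff_adj.2 h
  have h2 : G.dist r v ≤ G.dist r u + G.dist u v := hG.isConnected.dist_triangle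
  have h3 : G.dist r u ≤ G.dist r v + G.dist v u := hG.isConnected.dist_triangle
  have h4 : G.dist v u = 1 := SimpleGraph.dist_eq_one_iff_adj.2 h.symm
  have h5 := tree_adj_dist_ne hG r h
  omega

lemma tree_exists_parent (hG : G.IsTree) {r v : V} (hne : v ≠ r) :
    ∃ u, G.Adj u v ∧ G.dist r u + 1 = G.dist r v := by
  have hd : 0 < G.dist r v := by
    rcases Nat.eq_zero_or_pos (G.dist r v) with h0 | h
    · exact absurd ((hG.isConnected.dist_eq_zero_iff).1 h0).symm hne
    · exact h
  obtain ⟨p, hp⟩ := hG.isConnected.exists_walk_length_eq_dist r v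
  have hrev : p.reverse.length = G.dist r v := by rw [Walk.length_reverse, hp]
  rcases hq : p.reverse with _ | ⟨hadj, q⟩
  · rw [hq] at hrev; simp only [Walk.length_nil] at hrev; omega
  · rename_i u
    rw [hq] at hrev
    rw [Walk.length_cons] at hrev
    refine ⟨u, hadj.symm, ?_⟩
    have h1 : G.dist r u ≤ q.length := by
      have h0 := SimpleGraph.dist_le q.reverse
      rw [Walk.length_reverse] at h0
      have hco : G.dist r u = G.dist u r := SimpleGraph.dist_comm
      omega
    have h2 : G.dist r v ≤ G.dist r u + 1 := by
      have := hG.isConnected.dist_triangle (u := r) (v := u) (w := v)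
      have h3 : G.dist u v = 1 := SimpleGraph.dist_eq_one_iff_adj.2 hadj.symm
      omega
    omega

/-- The vertex set of the subtree of the child `c` of the root `r`. -/
def subT (G : SimpleGraph V) [Fintype V] (r c : V) : Finset V :=
  Finset.univ.filter (fun x => G.dist c x < G.dist r x)

lemma mem_subT {r c x : V} : x ∈ subT G r c ↔ G.dist c x < G.dist r x := by
  simp [subT]

lemma subT_dist (hG : G.IsTree) {r c x : V} (hrc : G.Adj r c) (hx : x ∈ subT G r c) :
    G.dist r x = G.dist c x + 1 := by
  have h1 : G.dist r x ≤ G.dist r c + G.dist c x := hG.isConnected.dist_triangle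
  have h2 : G.dist r c = 1 := SimpleGraph.dist_eq_one_iff_adj.2 hrc
  have h3 := mem_subT.1 hx
  omega

lemma not_mem_subT_dist (hG : G.IsTree) {r c x : V} (hrc : G.Adj r c) (hx : x ∉ subT G r c) :
    G.dist c x = G.dist r x + 1 := by
  have h1 : G.dist c x ≤ G.dist c r + G.dist r x := hG.isConnected.dist_triangle
  have h2 : G.dist c r = 1 := SimpleGraph.dist_eq_one_iff_adj.2 hrc.symm
  have h3 : ¬ G.dist c x < G.dist r x := fun hc => hx (mem_subT.2 hc)
  have h4 : G.dist x c ≠ G.dist x r := tree_adj_dist_ne hG x hrc.symm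
  have hco1 : G.dist x c = G.dist c x := SimpleGraph.dist_comm
  have hco2 : G.dist x r = G.dist r x := SimpleGraph.dist_comm
  omega

lemma c_mem_subT (hG : G.IsTree) {r c : V} (hrc : G.Adj r c) : c ∈ subT G r c := by
  rw [mem_subT]
  have h2 : G.dist r c = 1 := SimpleGraph.dist_eq_one_iff_adj.2 hrc
  simp [h2]

lemma r_not_mem_subT {r c : V} : r ∉ subT G r c := by
  rw [mem_subT]
  have : G.dist r r = 0 := SimpleGraph.dist_self
  omega

lemma mem_subT_ne_r {r c x : V} (hx : x ∈ subT G r c) : x ≠ r :=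
  fun h => r_not_mem_subT (h ▸ hx)

lemma subT_disjoint (hG : G.IsTree) {r c c' x : V} (h1 : G.Adj r c) (h2 : G.Adj r c')
    (hne : c ≠ c') (hx : x ∈ subT G r c) (hx' : x ∈ subT G r c') : False := by
  have hd1 : G.dist r x = G.dist c x + 1 := subT_dist hG h1 hx
  have hd2 : G.dist r x = G.dist c' x + 1 := subT_dist hG h2 hx'
  obtain ⟨pc, hpc⟩ := hG.isConnected.exists_walk_length_eq_dist c x
  obtain ⟨pc', hpc'⟩ := hG.isConnected.exists_walk_length_eq_dist c' x
  have hr1 : r ∉ pc.support := by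
    intro hmem
    have ha : G.dist c r ≤ (pc.takeUntil r hmem).length := SimpleGraph.dist_le _
    have hb : G.dist r x ≤ (pc.dropUntil r hmem).length := SimpleGraph.dist_le _
    have hc : (pc.takeUntil r hmem).length + (pc.dropUntil r hmem).length = pc.length := by
      have := congrArg Walk.length (pc.take_spec hmem)
      rwa [Walk.length_append] at this
    have hd : G.dist c r = 1 := SimpleGraph.dist_eq_one_iff_adj.2 h1.symm
    omega
  have hr2 : r ∉ pc'.support := by
    intro hmem
    have ha : G.dist c' r ≤ (pc'.takeUntil r hmem).length := SimpleGraph.dist_le _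
    have hb : G.dist r x ≤ (pc'.dropUntil r hmem).length := SimpleGraph.dist_le _
    have hc : (pc'.takeUntil r hmem).length + (pc'.dropUntil r hmem).length = pc'.length := by
      have := congrArg Walk.length (pc'.take_spec hmem)
      rwa [Walk.length_append] at this
    have hd : G.dist c' r = 1 := SimpleGraph.dist_eq_one_iff_adj.2 h2.symm
    omega
  have hw1 : (Walk.cons h1 pc : G.Walk r x).IsPath := by
    rw [Walk.cons_isPath_iff]
    exact ⟨pc.isPath_of_length_eq_dist hpc, hr1⟩
  have hw2 : (Walk.cons h2 pc' : G.Walk r x).IsPath := by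
    rw [Walk.cons_isPath_iff]
    exact ⟨pc'.isPath_of_length_eq_dist hpc', hr2⟩
  have := hG.IsAcyclic.path_unique ⟨_, hw1⟩ ⟨_, hw2⟩
  have hsupp := congrArg (fun q : G.Path r x => q.1.support) this
  simp only [Walk.support_cons] at hsupp
  have : pc.support = pc'.support := by
    injection hsupp
  rw [pc.support_eq_cons, pc'.support_eq_cons] at this
  injection this with hcc _
  exact hne hcc

lemma subT_cover (hG : G.IsTree) {r v : V} (hne : v ≠ r) :
    ∃ c, G.Adj r c ∧ v ∈ subT G r c := by
  obtain ⟨p, hp⟩ := hG.isConnected.exists_walk_length_eq_dist r v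
  cases p with
  | nil =>
    exact absurd rfl hne.symm
  | cons hadj q =>
    rename_i c
    refine ⟨c, hadj, mem_subT.2 ?_⟩
    rw [Walk.length_cons] at hp
    have h1 : G.dist c v ≤ q.length := SimpleGraph.dist_le q
    omega

lemma subT_path_in (hG : G.IsTree) {r c x : V} (hrc : G.Adj r c) (hx : x ∈ subT G r c) :
    ∃ w : G.Walk c x, w.length = G.dist c x ∧ ∀ y ∈ w.support, y ∈ subT G r c := by
  obtain ⟨w, hw⟩ := hG.isConnected.exists_walk_length_eq_dist c x
  refine ⟨w, hw, ?_⟩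
  intro y hy
  have h1 : G.dist c y ≤ (w.takeUntil y hy).length := SimpleGraph.dist_le _
  have h2 : G.dist y x ≤ (w.dropUntil y hy).length := SimpleGraph.dist_le _
  have h3 : (w.takeUntil y hy).length + (w.dropUntil y hy).length = w.length := by
    have := congrArg Walk.length (w.take_spec hy)
    rwa [Walk.length_append] at this
  have h4 : G.dist r x = G.dist c x + 1 := subT_dist hG hrc hx
  rw [mem_subT]
  by_contra hcon
  push_neg at hcon
  have h5 : G.dist r x ≤ G.dist r y + G.dist y x := hG.isConnected.dist_triangle
  omega

lemma walk_lift {A : Set V} : ∀ {a b : V} (w : G.Walk a b) (_ : ∀ y ∈ w.support, y ∈ A)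
    (ha : a ∈ A) (hb : b ∈ A),
    ∃ w' : (G.induce A).Walk ⟨a, ha⟩ ⟨b, hb⟩, w'.length = w.length := by
  intro a b w
  induction w with
  | nil => intro _ ha hb; exact ⟨Walk.nil, rfl⟩
  | cons hadj q ih =>
    rename_i x m y
    intro hsup hx hy
    have hm : m ∈ A := hsup m (by simp [Walk.support_cons])
    obtain ⟨w', hw'⟩ := ih (fun z hz => hsup z (by simp [Walk.support_cons, hz])) hm hy
    exact ⟨Walk.cons (show (G.induce A).Adj ⟨x, hx⟩ ⟨m, hm⟩ from hadj) w', by simp [hw']⟩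

lemma subT_isTree (hG : G.IsTree) {r c : V} (hrc : G.Adj r c) :
    (G.induce (↑(subT G r c) : Set V)).IsTree := by
  haveI : Nonempty ↥(↑(subT G r c) : Set V) := ⟨⟨c, c_mem_subT hG hrc⟩⟩
  refine ⟨⟨?_⟩, ?_⟩
  · · rintro ⟨v, hv⟩ ⟨w, hw⟩
      obtain ⟨wv, _, hv2⟩ := subT_path_in hG hrc hv
      obtain ⟨ww, _, hw2⟩ := subT_path_in hG hrc hw
      obtain ⟨wv', _⟩ := walk_lift (A := (↑(subT G r c) : Set V)) wv hv2
        (c_mem_subT hG hrc) hv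
      obtain ⟨ww', _⟩ := walk_lift (A := (↑(subT G r c) : Set V)) ww hw2
        (c_mem_subT hG hrc) hw
      exact ⟨wv'.reverse.append ww'⟩
  · intro v w hcyc
    have hmap : (w.map (Embedding.induce (G := G) (↑(subT G r c) : Set V)).toHom).IsCycle :=
      hcyc.map (Embedding.induce (G := G) (↑(subT G r c) : Set V)).injective
    exact hG.IsAcyclic _ hmap

lemma subT_dist_transfer (hG : G.IsTree) {r c x : V} (hrc : G.Adj r c) (hx : x ∈ subT G r c) :
    (G.induce (↑(subT G r c) : Set V)).dist ⟨c, c_mem_subT hG hrc⟩ ⟨x, hx⟩ = G.dist c x := by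
  apply le_antisymm
  · obtain ⟨w, hwl, hws⟩ := subT_path_in hG hrc hx
    obtain ⟨w', hw'⟩ := walk_lift (A := (↑(subT G r c) : Set V)) w hws (c_mem_subT hG hrc) hx
    calc (G.induce (↑(subT G r c) : Set V)).dist ⟨c, _⟩ ⟨x, hx⟩ ≤ w'.length :=
          SimpleGraph.dist_le w'
      _ = G.dist c x := by rw [hw', hwl]
  · obtain ⟨w', hw'⟩ := (subT_isTree hG hrc).isConnected.exists_walk_length_eq_dist
      ⟨c, c_mem_subT hG hrc⟩ ⟨x, hx⟩
    calc G.dist c x ≤ (w'.map (Embedding.induce (↑(subT G r c) : Set V)).toHom).length :=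
          SimpleGraph.dist_le _
      _ = w'.length := by rw [Walk.length_map]
      _ = _ := hw'

lemma subT_card_sum (hG : G.IsTree) (r : V) :
    ∑ c ∈ G.neighborFinset r, (subT G r c).card = Fintype.card V - 1 := by
  have hdisj : ∀ c ∈ G.neighborFinset r, ∀ c' ∈ G.neighborFinset r, c ≠ c' →
      Disjoint (subT G r c) (subT G r c') := by
    intro c hc c' hc' hne
    rw [Finset.disjoint_left]
    intro x hx hx'
    exact subT_disjoint hG ((mem_neighborFinset G r c).1 hc)
      ((mem_neighborFinset G r c').1 hc') hne hx hx'
  rw [← Finset.card_biUnion hdisj]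
  congr 1
  have : (G.neighborFinset r).biUnion (fun c => subT G r c) = Finset.univ.erase r := by
    ext x
    simp only [Finset.mem_biUnion, Finset.mem_erase, Finset.mem_univ, and_true]
    constructor
    · rintro ⟨c, hc, hx⟩
      exact mem_subT_ne_r hx
    · intro hx
      obtain ⟨c, hc, hmem⟩ := subT_cover hG hx
      exact ⟨c, (mem_neighborFinset G r c).2 hc, hmem⟩
  rw [this, Finset.card_erase_of_mem (Finset.mem_univ r), Finset.card_univ]

lemma edge_in_subT (hG : G.IsTree) (r : V) {u v : V} (h : G.Adj u v) (hu : u ≠ r)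
    (hdist : G.dist r v = G.dist r u + 1) :
    ∃ c, G.Adj r c ∧ u ∈ subT G r c ∧ v ∈ subT G r c := by
  obtain ⟨c, hrc, hus⟩ := subT_cover hG hu
  refine ⟨c, hrc, hus, mem_subT.2 ?_⟩
  have h1 : G.dist c v ≤ G.dist c u + G.dist u v := hG.isConnected.dist_triangle
  have h2 : G.dist u v = 1 := SimpleGraph.dist_eq_one_iff_adj.2 h
  have h3 : G.dist r u = G.dist c u + 1 := subT_dist hG hrc hus
  omega

lemma edge_classify (hG : G.IsTree) (r : V) {u v : V} (h : G.Adj u v) :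
    (u = r) ∨ (v = r) ∨ ∃ c, G.Adj r c ∧ u ∈ subT G r c ∧ v ∈ subT G r c := by
  by_cases hu : u = r
  · exact Or.inl hu
  by_cases hv : v = r
  · exact Or.inr (Or.inl hv)
  refine Or.inr (Or.inr ?_)
  rcases tree_adj_dist hG r h with hd | hd
  · exact edge_in_subT hG r h hu hd
  · obtain ⟨c, h1, h2, h3⟩ := edge_in_subT hG r h.symm hv hd
    exact ⟨c, h1, h3, h2⟩

lemma branch_unique (hG : G.IsTree) {r c c' x : V} (h1 : G.Adj r c) (h2 : G.Adj r c')
    (hx : x ∈ subT G r c) (hx' : x ∈ subT G r c') : c = c' := by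
  by_contra hne
  exact subT_disjoint hG h1 h2 hne hx hx'

lemma dist_one_subT_eq (hG : G.IsTree) {r c v : V} (hrc : G.Adj r c) (hv : v ∈ subT G r c)
    (hd : G.dist r v = 1) : v = c := by
  have h1 : G.dist r v = G.dist c v + 1 := subT_dist hG hrc hv
  have h2 : G.dist c v = 0 := by omega
  exact ((hG.isConnected.dist_eq_zero_iff).1 h2).symm

lemma parent_transfer (hG : G.IsTree) {r c u v : V} (hrc : G.Adj r c)
    (hu : u ∈ subT G r c) (hv : v ∈ subT G r c) (hp : IsParent G r u v) :
    IsParent (G.induce (↑(subT G r c) : Set V)) ⟨c, c_mem_subT hG hrc⟩ ⟨u, hu⟩ ⟨v, hv⟩ := by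
  refine ⟨hp.1, ?_⟩
  rw [subT_dist_transfer hG hrc hu, subT_dist_transfer hG hrc hv]
  have h1 : G.dist r u = G.dist c u + 1 := subT_dist hG hrc hu
  have h2 : G.dist r v = G.dist c v + 1 := subT_dist hG hrc hv
  have h3 := hp.2
  omega

lemma parent_in_subT (hG : G.IsTree) {r u v : V} (hp : IsParent G r u v) (hu : u ≠ r) :
    ∃ c, G.Adj r c ∧ u ∈ subT G r c ∧ v ∈ subT G r c :=
  edge_in_subT hG r hp.1 hu hp.2.symm

lemma parent_ne_root (hG : G.IsTree) {r u v : V} (hp : IsParent G r u v) : v ≠ r := by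
  intro h
  have h1 := hp.2
  rw [h] at h1
  simp [SimpleGraph.dist_self] at h1

lemma parent_of_root (hG : G.IsTree) {r v : V} (hp : IsParent G r r v) :
    G.Adj r v ∧ G.dist r v = 1 := by
  refine ⟨hp.1, ?_⟩
  have := hp.2
  simp [SimpleGraph.dist_self] at this
  omega

end AuxTree

noncomputable section AuxAlloc


/-- Allocation of key-separated blocks of prescribed sizes inside a finite point set. -/
lemma allocate (p : ℝ × ℝ) (e : ℕ) :
    ∀ (k : List ℕ) (R : Finset (ℝ × ℝ)),
    (∀ t : ℝ, (R.filter (fun z => kkey p z = t)).card ≤ e) →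
    (k.sum + k.length * e ≤ R.card) →
    ∃ B : List (Finset (ℝ × ℝ)), B.length = k.length ∧
      (∀ i, i < k.length → (B.getD i ∅) ⊆ R ∧ (B.getD i ∅).card = k.getD i 0) ∧
      (∀ i j, i < j → j < k.length →
        ∀ a ∈ B.getD i ∅, ∀ b ∈ B.getD j ∅, kkey p a < kkey p b) := by
  classical
  intro k
  induction k with
  | nil =>
    intro R _ _
    exact ⟨[], rfl, fun i hi => absurd hi (Nat.not_lt_zero i), fun i j _ hj => absurd hj (Nat.not_lt_zero j)⟩
  | cons m k ih =>
    intro R hkey hbud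
    have hbud2 : m + (k.sum + k.length * e) + e ≤ R.card := by
      simp only [List.sum_cons, List.length_cons] at hbud
      have hmul : (k.length + 1) * e = k.length * e + e := by ring
      omega
    rcases Nat.eq_zero_or_pos m with hm | hm
    · -- zero-size first block
      obtain ⟨B, hBlen, hBc, hBsep⟩ := ih R hkey (by omega)
      refine ⟨∅ :: B, by simp [hBlen], ?_, ?_⟩
      · intro i hi
        cases i with
        | zero => simp [hm]
        | succ i =>
          simp only [List.getD_cons_succ]
          exact hBc i (by simpa using Nat.lt_of_succ_lt_succ hi)
      · intro i j hij hj a ha b hb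
        cases i with
        | zero => simp at ha
        | succ i =>
          cases j with
          | zero => omega
          | succ j =>
            simp only [List.getD_cons_succ] at ha hb
            exact hBsep i j (by omega) (by simpa using Nat.lt_of_succ_lt_succ hj) a ha b hb
    · -- positive-size first block
      have hRcard : m ≤ R.card := by omega
      have hRne : R.Nonempty := Finset.card_pos.1 (lt_of_lt_of_le hm hRcard)
      set K : Finset ℝ := R.image (kkey p) with hK
      have hKne : K.Nonempty := hRne.image _
      set K' : Finset ℝ := K.filter (fun t => m ≤ (R.filter (fun z => kkey p z ≤ t)).card)
        with hK'
      have hK'ne : K'.Nonempty := by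
        refine ⟨K.max' hKne, Finset.mem_filter.2 ⟨K.max'_mem hKne, ?_⟩⟩
        have : R ⊆ R.filter (fun z => kkey p z ≤ K.max' hKne) := by
          intro z hz
          exact Finset.mem_filter.2 ⟨hz, K.le_max' _ (Finset.mem_image_of_mem _ hz)⟩
        calc m ≤ R.card := hRcard
          _ ≤ _ := Finset.card_le_card this
      set t0 : ℝ := K'.min' hK'ne with ht0
      have ht0K' : t0 ∈ K' := K'.min'_mem hK'ne
      have ht0card : m ≤ (R.filter (fun z => kkey p z ≤ t0)).card :=
        (Finset.mem_filter.1 ht0K').2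
      -- points with key strictly below t0 number at most m - 1
      have hlt_card : (R.filter (fun z => kkey p z < t0)).card ≤ m - 1 := by
        by_contra hcon
        push_neg at hcon
        have hmle : m ≤ (R.filter (fun z => kkey p z < t0)).card := by omega
        have hne2 : (R.filter (fun z => kkey p z < t0)).Nonempty :=
          Finset.card_pos.1 (lt_of_lt_of_le hm hmle)
        set K2 : Finset ℝ := (R.filter (fun z => kkey p z < t0)).image (kkey p) with hK2
        have hK2ne : K2.Nonempty := hne2.image _
        set t2 := K2.max' hK2ne with ht2
        have ht2mem : t2 ∈ K2 := K2.max'_mem hK2ne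
        obtain ⟨z2, hz2, hz2e⟩ := Finset.mem_image.1 ht2mem
        have ht2lt : t2 < t0 := by
          rw [← hz2e]
          exact (Finset.mem_filter.1 hz2).2
        have ht2K : t2 ∈ K := by
          rw [← hz2e]
          exact Finset.mem_image_of_mem _ (Finset.filter_subset _ _ hz2)
        have hsub : R.filter (fun z => kkey p z < t0) ⊆ R.filter (fun z => kkey p z ≤ t2) := by
          intro z hz
          rw [Finset.mem_filter] at hz ⊢
          exact ⟨hz.1, K2.le_max' _ (Finset.mem_image_of_mem _ (Finset.mem_filter.2 hz))⟩
        have ht2K' : t2 ∈ K' := by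
          rw [hK', Finset.mem_filter]
          exact ⟨ht2K, le_trans hmle (Finset.card_le_card hsub)⟩
        have := K'.min'_le _ ht2K'
        rw [← ht0] at this
        linarith
      -- split filter(≤ t0) into < and =
      have hsplit : (R.filter (fun z => kkey p z ≤ t0)).card
          = (R.filter (fun z => kkey p z < t0)).card
            + (R.filter (fun z => kkey p z = t0)).card := by
        rw [← Finset.card_union_of_disjoint]
        · congr 1
          ext z
          simp only [Finset.mem_union, Finset.mem_filter]
          constructor
          · rintro ⟨hz, hle⟩
            rcases lt_or_eq_of_le hle with h | h
            · exact Or.inl ⟨hz, h⟩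
            · exact Or.inr ⟨hz, h⟩
          · rintro (⟨hz, h⟩ | ⟨hz, h⟩)
            · exact ⟨hz, le_of_lt h⟩
            · exact ⟨hz, le_of_eq h⟩
        · rw [Finset.disjoint_left]
          rintro z hz hz'
          have h1 := (Finset.mem_filter.1 hz).2
          have h2 := (Finset.mem_filter.1 hz').2
          linarith
      have hle_card : (R.filter (fun z => kkey p z ≤ t0)).card ≤ m - 1 + e := by
        have := hkey t0
        omega
      -- choose the first block between filter(<t0) and filter(≤ t0)
      have hsub2 : R.filter (fun z => kkey p z < t0) ⊆ R.filter (fun z => kkey p z ≤ t0) := by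
        intro z hz
        rw [Finset.mem_filter] at hz ⊢
        exact ⟨hz.1, le_of_lt hz.2⟩
      obtain ⟨B1, hB1l, hB1u, hB1card⟩ := Finset.exists_subsuperset_card_eq
        (n := (m - (R.filter (fun z => kkey p z < t0)).card) + (R.filter (fun z => kkey p z < t0)).card) hsub2 (by omega) (by omega)
      have hB1card' : B1.card = m := by
        rw [hB1card]
        omega
      -- the remaining points
      set R' : Finset (ℝ × ℝ) := R.filter (fun z => t0 < kkey p z) with hR'
      have hR'key : ∀ t : ℝ, (R'.filter (fun z => kkey p z = t)).card ≤ e := by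
        intro t
        calc (R'.filter (fun z => kkey p z = t)).card
            ≤ (R.filter (fun z => kkey p z = t)).card := by
              apply Finset.card_le_card
              intro z hz
              rw [Finset.mem_filter] at hz ⊢
              exact ⟨(Finset.mem_filter.1 hz.1).1, hz.2⟩
          _ ≤ e := hkey t
      have hR'card : R.card = (R.filter (fun z => kkey p z ≤ t0)).card + R'.card := by
        rw [hR']
        rw [← Finset.card_union_of_disjoint]
        · congr 1
          ext z
          simp only [Finset.mem_union, Finset.mem_filter]
          constructor
          · intro hz
            rcases le_or_gt (kkey p z) t0 with h | h
            · exact Or.inl ⟨hz, h⟩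
            · exact Or.inr ⟨hz, h⟩
          · rintro (⟨hz, _⟩ | ⟨hz, _⟩) <;> exact hz
        · rw [Finset.disjoint_left]
          rintro z hz hz'
          have u1 := (Finset.mem_filter.1 hz).2
          have u2 := (Finset.mem_filter.1 hz').2
          linarith
      have hbud' : k.sum + k.length * e ≤ R'.card := by
        have hfe : (R.filter (fun z => kkey p z ≤ t0)).card ≤ m + e := by omega
        omega
      obtain ⟨B, hBlen, hBc, hBsep⟩ := ih R' hR'key hbud'
      refine ⟨B1 :: B, by simp [hBlen], ?_, ?_⟩
      · intro i hi
        cases i with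
        | zero =>
          simp only [List.getD_cons_zero]
          exact ⟨le_trans hB1u (Finset.filter_subset _ _), hB1card'⟩
        | succ i =>
          simp only [List.getD_cons_succ]
          obtain ⟨hs, hc⟩ := hBc i (by simpa using Nat.lt_of_succ_lt_succ hi)
          exact ⟨le_trans hs (Finset.filter_subset _ _), hc⟩
      · intro i j hij hj a ha b hb
        cases j with
        | zero => omega
        | succ j =>
          have hjlen : j < k.length := by simpa using Nat.lt_of_succ_lt_succ hj
          simp only [List.getD_cons_succ] at hb
          cases i with
          | zero =>
            simp only [List.getD_cons_zero] at ha
            have hb' : b ∈ R' := (hBc j hjlen).1 hb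
            have hbt : t0 < kkey p b := (Finset.mem_filter.1 hb').2
            have hat : kkey p a ≤ t0 := (Finset.mem_filter.1 (hB1u ha)).2
            linarith
          | succ i =>
            simp only [List.getD_cons_succ] at ha
            exact hBsep i j (by omega) hjlen a ha b hb

end AuxAlloc
noncomputable section MainLemma

open scoped Classical

lemma seg_snd_le {a b z : ℝ × ℝ} (hz : z ∈ segment ℝ a b) : z.2 ≤ max a.2 b.2 := by
  obtain ⟨μ, ν, hμ, hν, hμν, heq⟩ := hz
  have hν' : ν = 1 - μ := by linarith
  subst hν'
  have h2 : μ * a.2 + (1 - μ) * b.2 = z.2 := by have := congrArg Prod.snd heq; simpa using this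
  have h3 : a.2 ≤ max a.2 b.2 := le_max_left _ _
  have h4 : b.2 ≤ max a.2 b.2 := le_max_right _ _
  nlinarith [mul_le_mul_of_nonneg_left h3 hμ,
    mul_le_mul_of_nonneg_left h4 (show (0:ℝ) ≤ 1 - μ by linarith)]

lemma card_coe_finset {V : Type} [Fintype V] (s : Finset V) :
    Fintype.card {x // x ∈ (↑s : Set V)} = s.card :=
  (Fintype.card_congr (Equiv.subtypeEquivRight (fun _ => Finset.mem_coe))).trans
    (Fintype.card_coe s)

/-- Main lemma: universal point sets with pairwise-distinct second coordinates host
strictly-upward straight-line drawings of every rooted tree of the appropriate size. -/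
lemma lemA (ℓ : ℕ) (hℓ : 3 ≤ ℓ) :
    ∀ n : ℕ, 1 ≤ n → ∀ (S : Finset (ℝ × ℝ)),
    S.card + ℓ = (ℓ - 1) * n + 2 →
    (∀ Q : Finset (ℝ × ℝ), Q ⊆ S → ℓ ≤ Q.card → ¬ Collinear ℝ (Q : Set (ℝ × ℝ))) →
    (∀ a ∈ S, ∀ b ∈ S, a.2 = b.2 → a = b) →
    ∀ (V : Type) [Fintype V] (G : SimpleGraph V), G.IsTree → Fintype.card V = n →
    ∀ r : V, ∃ f : V → ℝ × ℝ,
      IsStraightLineDrawing G f ∧ (∀ u v : V, IsParent G r u v → (f v).2 < (f u).2) ∧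
      (∀ v, f v ∈ S) ∧ (∀ v, v ≠ r → (f v).2 < (f r).2) := by
  intro n
  induction n using Nat.strong_induction_on with
  | _ n ih =>
  intro hn S hScard hgen hdisty V instV G hG hcard r
  by_cases hn1 : n = 1
  · -- base case
    subst hn1
    have hcard1 : Fintype.card V = 1 := hcard
    obtain ⟨x, hx⟩ := Fintype.card_eq_one_iff.1 hcard1
    have hall : ∀ v : V, v = r := fun v => (hx v).trans (hx r).symm
    have hS1 : S.card = 1 := by
      have : (ℓ - 1) * 1 = ℓ - 1 := mul_one _
      omega
    obtain ⟨s0, hs0⟩ := Finset.card_pos.1 (by omega : 0 < S.card)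
    refine ⟨fun _ => s0, ⟨?_, ?_, ?_⟩, ?_, fun _ => hs0, ?_⟩
    · intro a b _
      rw [hall a, hall b]
    · intro u v w h _ _
      exact absurd ((hall u).trans (hall v).symm) h.ne
    · intro u v u' v' h _ _
      exact absurd ((hall u).trans (hall v).symm) h.ne
    · intro u v hp
      exact absurd ((hall u).trans (hall v).symm) hp.1.ne
    · intro v hv
      exact absurd ((hall v).trans (hall r).symm) hv
  · -- inductive step
    have hn2 : 2 ≤ n := by omega
    have hmul2 : (ℓ - 1) * 2 ≤ (ℓ - 1) * n := Nat.mul_le_mul_left _ hn2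
    have hx1 : (ℓ - 1) * 2 = 2 * ℓ - 2 := by omega
    have hSge : ℓ ≤ S.card := by omega
    have hSne : S.Nonempty := Finset.card_pos.1 (by omega)
    obtain ⟨p, hpS, hpmax⟩ := S.exists_max_image (fun z => z.2) hSne
    have hpstrict : ∀ z ∈ S, z ≠ p → z.2 < p.2 := fun z hz hne =>
      lt_of_le_of_ne (hpmax z hz) (fun h => hne (hdisty z hz p hpS h))
    set S' : Finset (ℝ × ℝ) := S.erase p with hS'def
    have hS'card : S'.card + 1 = S.card := by
      rw [hS'def, Finset.card_erase_of_mem hpS]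
      omega
    have hS'S : S' ⊆ S := Finset.erase_subset _ _
    have hS'lt : ∀ z ∈ S', z.2 < p.2 := fun z hz =>
      hpstrict z (hS'S hz) (Finset.ne_of_mem_erase hz)
    have hS'ne : ∀ z ∈ S', z ≠ p := fun z hz => Finset.ne_of_mem_erase hz
    -- the neighbors of the root
    set nbrs : Finset V := G.neighborFinset r with hnbrs
    have hadj_of_mem : ∀ c ∈ nbrs, G.Adj r c := fun c hc => (G.mem_neighborFinset r c).1 hc
    have hnbrs_ne_r : ∀ c ∈ nbrs, c ≠ r := fun c hc => (hadj_of_mem c hc).ne'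
    -- subtree sizes
    have hsub_pos : ∀ c ∈ nbrs, 1 ≤ (subT G r c).card := fun c hc =>
      Finset.card_pos.2 ⟨c, c_mem_subT hG (hadj_of_mem c hc)⟩
    have hsub_lt : ∀ c ∈ nbrs, (subT G r c).card < n := by
      intro c hc
      have h1 : subT G r c ⊆ Finset.univ.erase r := by
        intro x hx
        exact Finset.mem_erase.2 ⟨mem_subT_ne_r hx, Finset.mem_univ x⟩
      have h2 := Finset.card_le_card h1
      rw [Finset.card_erase_of_mem (Finset.mem_univ r), Finset.card_univ, hcard] at h2
      omega
    set m : V → ℕ := fun c => (ℓ - 1) * (subT G r c).card + 2 - ℓ with hm_def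
    have hm : ∀ c ∈ nbrs, m c + ℓ = (ℓ - 1) * (subT G r c).card + 2 := by
      intro c hc
      simp only [hm_def]
      have hA := hsub_pos c hc
      have hB : ℓ - 1 ≤ (ℓ - 1) * (subT G r c).card :=
        Nat.le_mul_of_pos_right _ (by omega)
      omega
    have hm_pos : ∀ c ∈ nbrs, 1 ≤ m c := by
      intro c hc
      have := hm c hc
      have hA := hsub_pos c hc
      have hB : ℓ - 1 ≤ (ℓ - 1) * (subT G r c).card :=
        Nat.le_mul_of_pos_right _ (by omega)
      omega
    -- key-multiplicity bound
    have hkeybound : ∀ t : ℝ, (S'.filter (fun z => kkey p z = t)).card ≤ ℓ - 2 := by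
      intro t
      by_contra hcon
      push_neg at hcon
      set F := S'.filter (fun z => kkey p z = t) with hF
      have hpF : p ∉ F := fun h => (hS'ne p (Finset.filter_subset _ _ h)) rfl
      have hQcard : ℓ ≤ (insert p F).card := by
        rw [Finset.card_insert_of_notMem hpF]
        omega
      have hQsub : insert p F ⊆ S := by
        intro z hz
        rcases Finset.mem_insert.1 hz with rfl | hz
        · exact hpS
        · exact hS'S (Finset.filter_subset _ _ hz)
      apply hgen _ hQsub hQcard
      rw [Finset.coe_insert]
      apply collinear_of_kkey_eq (t := t)
      intro z hz
      rw [Finset.mem_coe, hF, Finset.mem_filter] at hz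
      exact ⟨hS'lt z hz.1, hz.2⟩
    -- allocate the blocks
    have hnbrs_nonempty : nbrs.Nonempty := by
      obtain ⟨v, hv⟩ := Fintype.exists_ne_of_one_lt_card (by omega) r
      obtain ⟨c, hc, _⟩ := subT_cover hG hv
      exact ⟨c, (G.mem_neighborFinset r c).2 hc⟩
    have hsum_sub : ∑ c ∈ nbrs, (subT G r c).card = n - 1 := by
      rw [subT_card_sum hG r, hcard]
    have hbudget : (nbrs.toList.map m).sum + (nbrs.toList.map m).length * (ℓ - 2) ≤ S'.card := by
      have hsum0 : (nbrs.toList.map m).sum = ∑ c ∈ nbrs, m c := Finset.sum_map_toList nbrs m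
      have hlen0 : (nbrs.toList.map m).length = nbrs.card := by
        rw [List.length_map, Finset.length_toList]
      have hsum1 : ∑ c ∈ nbrs, (m c + ℓ) = ∑ c ∈ nbrs, ((ℓ - 1) * (subT G r c).card + 2) :=
        Finset.sum_congr rfl (fun c hc => hm c hc)
      rw [Finset.sum_add_distrib, Finset.sum_add_distrib, Finset.sum_const, Finset.sum_const,
        ← Finset.mul_sum, hsum_sub] at hsum1
      simp only [smul_eq_mul] at hsum1
      have hn' : (ℓ - 1) * n = (ℓ - 1) * (n - 1) + (ℓ - 1) := by
        have h0 : n = (n - 1) + 1 := by omega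
        calc (ℓ - 1) * n = (ℓ - 1) * ((n - 1) + 1) := by rw [← h0]
          _ = (ℓ - 1) * (n - 1) + (ℓ - 1) * 1 := by rw [Nat.mul_add]
          _ = (ℓ - 1) * (n - 1) + (ℓ - 1) := by rw [Nat.mul_one]
      have hk' : nbrs.card * ℓ = nbrs.card * (ℓ - 2) + nbrs.card * 2 := by
        calc nbrs.card * ℓ = nbrs.card * ((ℓ - 2) + 2) := by rw [Nat.sub_add_cancel (by omega)]
          _ = nbrs.card * (ℓ - 2) + nbrs.card * 2 := by rw [Nat.mul_add]
      rw [hsum0, hlen0]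
      omega
    obtain ⟨Blist, hBlen, hBprop, hBsep⟩ := allocate p (ℓ - 2) (nbrs.toList.map m) S'
      hkeybound hbudget
    -- blocks indexed by neighbors
    have hLnodup : nbrs.toList.Nodup := nbrs.nodup_toList
    have hLmem : ∀ c : V, c ∈ nbrs.toList ↔ c ∈ nbrs := fun c => Finset.mem_toList
    have hklen : (nbrs.toList.map m).length = nbrs.toList.length := List.length_map _
    set Bc : V → Finset (ℝ × ℝ) := fun c => Blist.getD (nbrs.toList.idxOf c) ∅ with hBc_def
    have hidx_lt : ∀ c ∈ nbrs, nbrs.toList.idxOf c < nbrs.toList.length := fun c hc =>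
      List.idxOf_lt_length_iff.2 ((hLmem c).2 hc)
    have hidx_get : ∀ (c : V) (hc : c ∈ nbrs),
        nbrs.toList[nbrs.toList.idxOf c]'(hidx_lt c hc) = c := fun c hc =>
      List.getElem_idxOf (hidx_lt c hc)
    have hkval : ∀ (c : V) (hc : c ∈ nbrs), (nbrs.toList.map m).getD (nbrs.toList.idxOf c) 0 = m c := by
      intro c hc
      rw [List.getD_eq_getElem _ _ (by rw [hklen]; exact hidx_lt c hc)]
      rw [List.getElem_map]
      rw [hidx_get c hc]
    have hBsub : ∀ c ∈ nbrs, Bc c ⊆ S' := by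
      intro c hc
      exact (hBprop _ (by rw [hklen]; exact hidx_lt c hc)).1
    have hBcard : ∀ (c : V) (hc : c ∈ nbrs), (Bc c).card = m c := by
      intro c hc
      rw [hBc_def]
      have := (hBprop _ (by rw [hklen]; exact hidx_lt c hc)).2
      rw [this, hkval c hc]
    have hBne : ∀ (c : V) (hc : c ∈ nbrs), (Bc c).Nonempty := by
      intro c hc
      apply Finset.card_pos.1
      rw [hBcard c hc]
      exact hm_pos c hc
    have hidx_inj : ∀ c ∈ nbrs, ∀ c' ∈ nbrs, c ≠ c' →
        nbrs.toList.idxOf c ≠ nbrs.toList.idxOf c' := by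
      intro c hc c' hc' hne h
      apply hne
      rw [← hidx_get c hc, ← hidx_get c' hc']
      congr 1
    have hsep : ∀ c ∈ nbrs, ∀ c' ∈ nbrs, c ≠ c' →
        (∀ a ∈ Bc c, ∀ b ∈ Bc c', kkey p a < kkey p b) ∨
        (∀ a ∈ Bc c', ∀ b ∈ Bc c, kkey p a < kkey p b) := by
      intro c hc c' hc' hne
      rcases lt_or_gt_of_ne (hidx_inj c hc c' hc' hne) with h | h
      · left
        intro a ha b hb
        exact hBsep _ _ h (by rw [hklen]; exact hidx_lt c' hc') a ha b hb
      · right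
        intro a ha b hb
        exact hBsep _ _ h (by rw [hklen]; exact hidx_lt c hc) a ha b hb
    have hBdisj : ∀ c ∈ nbrs, ∀ c' ∈ nbrs, c ≠ c' → ∀ x, x ∈ Bc c → x ∈ Bc c' → False := by
      intro c hc c' hc' hne x h1 h2
      rcases hsep c hc c' hc' hne with h | h
      · exact lt_irrefl _ (h x h1 x h2)
      · exact lt_irrefl _ (h x h2 x h1)
    -- cones
    set sc : V → ℝ := fun c => sInf (kkey p '' ↑(Bc c)) with hsc_def
    set tc : V → ℝ := fun c => sSup (kkey p '' ↑(Bc c)) with htc_def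
    set Kc : V → Set (ℝ × ℝ) := fun c => kcone p (sc c) (tc c) with hKc_def
    have hfin : ∀ c : V, (kkey p '' ↑(Bc c)).Finite := fun c => ((Bc c).finite_toSet.image _)
    have himgne : ∀ (c : V) (hc : c ∈ nbrs), (kkey p '' ↑(Bc c)).Nonempty := by
      intro c hc
      obtain ⟨z, hz⟩ := hBne c hc
      exact ⟨kkey p z, z, hz, rfl⟩
    have hBK : ∀ (c : V) (hc : c ∈ nbrs), ∀ z ∈ Bc c, z ∈ Kc c := by
      intro c hc z hz
      apply mem_kcone_of_key (hS'lt z (hBsub c hc hz))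
      · exact csInf_le ((hfin c).bddBelow) ⟨z, hz, rfl⟩
      · exact le_csSup ((hfin c).bddAbove) ⟨z, hz, rfl⟩
    have hpKc : ∀ c : V, p ∈ Kc c := fun c => self_mem_kcone p _ _
    have hKdisj : ∀ c ∈ nbrs, ∀ c' ∈ nbrs, c ≠ c' → ∀ z, z ∈ Kc c → z ∈ Kc c' → z = p := by
      intro c hc c' hc' hne z h1 h2
      rcases hsep c hc c' hc' hne with h | h
      · have h3 : tc c < sc c' := by
          obtain ⟨a, haB, hae⟩ := (himgne c hc).csSup_mem (hfin c)
          obtain ⟨b, hbB, hbe⟩ := (himgne c' hc').csInf_mem (hfin c')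
          show sSup (kkey p '' ↑(Bc c)) < sInf (kkey p '' ↑(Bc c'))
          rw [← hae, ← hbe]
          exact h a haB b hbB
        exact kcone_inter_subset h3 ⟨h1, h2⟩
      · have h3 : tc c' < sc c := by
          obtain ⟨a, haB, hae⟩ := (himgne c' hc').csSup_mem (hfin c')
          obtain ⟨b, hbB, hbe⟩ := (himgne c hc).csInf_mem (hfin c)
          show sSup (kkey p '' ↑(Bc c')) < sInf (kkey p '' ↑(Bc c))
          rw [← hae, ← hbe]
          exact h a haB b hbB
        exact kcone_inter_subset h3 ⟨h2, h1⟩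
    have hsegK : ∀ (c : V), ∀ x y : ℝ × ℝ, x ∈ Kc c → y ∈ Kc c →
        segment ℝ x y ⊆ Kc c := fun c x y hx hy => (kcone_convex p _ _).segment_subset hx hy
    -- recursive drawings
    have hrec : ∀ (c : V) (hc : c ∈ nbrs),
        ∃ fc : {x // x ∈ (↑(subT G r c) : Set V)} → ℝ × ℝ,
        IsStraightLineDrawing (G.induce (↑(subT G r c) : Set V)) fc ∧
        (∀ u v, IsParent (G.induce (↑(subT G r c) : Set V))
            ⟨c, c_mem_subT hG (hadj_of_mem c hc)⟩ u v → (fc v).2 < (fc u).2) ∧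
        (∀ v, fc v ∈ Bc c) ∧
        (∀ v, v ≠ ⟨c, c_mem_subT hG (hadj_of_mem c hc)⟩ →
          (fc v).2 < (fc ⟨c, c_mem_subT hG (hadj_of_mem c hc)⟩).2) := by
      intro c hc
      have hcard' : (Bc c).card + ℓ = (ℓ - 1) * (subT G r c).card + 2 := by
        rw [hBcard c hc]; exact hm c hc
      exact ih (subT G r c).card (by rw [← hcard]; exact (hcard ▸ hsub_lt c hc))
        (hsub_pos c hc) (Bc c) hcard'
        (fun Q hQ hQc => hgen Q (fun z hz => hS'S (hBsub c hc (hQ hz))) hQc)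
        (fun a ha b hb => hdisty a (hS'S (hBsub c hc ha)) b (hS'S (hBsub c hc hb)))
        _ (G.induce (↑(subT G r c) : Set V)) (subT_isTree hG (hadj_of_mem c hc))
        (card_coe_finset _) ⟨c, c_mem_subT hG (hadj_of_mem c hc)⟩
    choose fc hfc1 hfc2 hfc3 hfc4 using hrec
    -- branch map
    have hbr0 : ∀ v : V, ∃ c, v ≠ r → c ∈ nbrs ∧ v ∈ subT G r c := by
      intro v
      by_cases hv : v = r
      · exact ⟨r, fun h => absurd hv h⟩
      · obtain ⟨c, hc1, hc2⟩ := subT_cover hG hv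
        exact ⟨c, fun _ => ⟨(G.mem_neighborFinset r c).2 hc1, hc2⟩⟩
    choose br hbr using hbr0
    have hbr1 : ∀ v : V, v ≠ r → br v ∈ nbrs := fun v hv => (hbr v hv).1
    have hbr2 : ∀ v : V, v ≠ r → v ∈ subT G r (br v) := fun v hv => (hbr v hv).2
    have hbruniq : ∀ v c : V, c ∈ nbrs → v ∈ subT G r c → br v = c := by
      intro v c hc hvc
      have hvr : v ≠ r := mem_subT_ne_r hvc
      exact branch_unique hG (hadj_of_mem _ (hbr1 v hvr)) (hadj_of_mem c hc) (hbr2 v hvr) hvc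
    -- the drawing
    set fT : V → V → ℝ × ℝ := fun c v =>
      if h : c ∈ nbrs ∧ v ∈ subT G r c then fc c h.1 ⟨v, h.2⟩ else p with hfT_def
    set f : V → ℝ × ℝ := fun v => if v = r then p else fT (br v) v with hf_def
    have hfr : f r = p := by rw [hf_def]; simp
    have hfval : ∀ (c : V) (hc : c ∈ nbrs) (v : V) (hv : v ∈ subT G r c),
        f v = fc c hc ⟨v, hv⟩ := by
      intro c hc v hv
      have hvr : v ≠ r := mem_subT_ne_r hv
      rw [hf_def]
      simp only [if_neg hvr]
      rw [hbruniq v c hc hv, hfT_def]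
      exact dif_pos ⟨hc, hv⟩
    have hfS' : ∀ v : V, v ≠ r → f v ∈ S' := by
      intro v hv
      rw [hfval (br v) (hbr1 v hv) v (hbr2 v hv)]
      exact hBsub _ (hbr1 v hv) (hfc3 _ (hbr1 v hv) _)
    have hfB : ∀ v : V, (hv : v ≠ r) → f v ∈ Bc (br v) := by
      intro v hv
      rw [hfval (br v) (hbr1 v hv) v (hbr2 v hv)]
      exact hfc3 _ (hbr1 v hv) _
    have hfS : ∀ v : V, f v ∈ S := by
      intro v
      by_cases hv : v = r
      · rw [hv, hfr]; exact hpS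
      · exact hS'S (hfS' v hv)
    have hfnp : ∀ v : V, v ≠ r → f v ≠ p := fun v hv => hS'ne _ (hfS' v hv)
    have hflt : ∀ v : V, v ≠ r → (f v).2 < p.2 := fun v hv => hS'lt _ (hfS' v hv)
    have hcsub : ∀ (c : V) (hc : c ∈ nbrs), c ∈ subT G r c :=
      fun c hc => c_mem_subT hG (hadj_of_mem c hc)
    have hfK : ∀ (c : V) (hc : c ∈ nbrs) (v : V) (hv : v ∈ subT G r c), f v ∈ Kc c := by
      intro c hc v hv
      rw [hfval c hc v hv]
      exact hBK c hc _ (hfc3 c hc _)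
    have hfcK : ∀ (c : V) (hc : c ∈ nbrs), f c ∈ Kc c := fun c hc => hfK c hc c (hcsub c hc)
    have hfc_lt : ∀ (c : V) (hc : c ∈ nbrs) (v : V) (hv : v ∈ subT G r c), v ≠ c →
        (f v).2 < (f c).2 := by
      intro c hc v hv hne
      rw [hfval c hc v hv, hfval c hc c (hcsub c hc)]
      exact hfc4 c hc ⟨v, hv⟩ (fun h => hne (congrArg Subtype.val h))
    have hble : ∀ (c : V) (hc : c ∈ nbrs) (x : V) (hx : x ∈ subT G r c),
        (f x).2 ≤ (f c).2 := by
      intro c hc x hx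
      by_cases h : x = c
      · rw [h]
      · exact le_of_lt (hfc_lt c hc x hx h)
    -- injectivity
    have hinj : Function.Injective f := by
      intro a b hab
      by_cases ha : a = r <;> by_cases hb : b = r
      · rw [ha, hb]
      · exact absurd (by rw [← hab, ha, hfr]) (Ne.symm (hfnp b hb))
      · exact absurd (by rw [hab, hb, hfr]) (Ne.symm (hfnp a ha))
      · by_cases hcc : br a = br b
        · have h1 := hfval (br a) (hbr1 a ha) a (hbr2 a ha)
          have h2 := hfval (br a) (hbr1 a ha) b (by rw [hcc]; exact hbr2 b hb)
          rw [h1, h2] at hab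
          exact congrArg Subtype.val ((hfc1 (br a) (hbr1 a ha)).1 hab)
        · exact absurd hab (by
            intro hab
            exact hBdisj _ (hbr1 a ha) _ (hbr1 b hb) hcc (f a)
              (hfB a ha) (by rw [hab]; exact hfB b hb))
    -- vertex-off-edge
    have key2A : ∀ (c : V) (hc : c ∈ nbrs) (w : V), w ≠ r → w ≠ c →
        f w ∉ segment ℝ (f r) (f c) := by
      intro c hc w hwr hwc hmem
      rw [hfr] at hmem
      by_cases hwbc : br w = c
      · have hwsub : w ∈ subT G r c := by rw [← hwbc]; exact hbr2 w hwr
        have h1 := (seg_snd_ge (hflt c (hnbrs_ne_r c hc)) hmem).1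
        have h2 := hfc_lt c hc w hwsub hwc
        linarith
      · have hKm : f w ∈ Kc c := hsegK c _ _ (hpKc c) (hfcK c hc) hmem
        have hKw : f w ∈ Kc (br w) := hfK (br w) (hbr1 w hwr) w (hbr2 w hwr)
        exact hfnp w hwr (hKdisj (br w) (hbr1 w hwr) c hc hwbc (f w) hKw hKm)
    have key2B : ∀ (c : V) (hc : c ∈ nbrs) (u v : V) (hu : u ∈ subT G r c)
        (hv : v ∈ subT G r c), G.Adj u v → ∀ w : V, w ≠ u → w ≠ v →
        f w ∉ segment ℝ (f u) (f v) := by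
      intro c hc u v hu hv hadj w hwu hwv hmem
      by_cases hwr : w = r
      · subst hwr
        rw [hfr] at hmem
        exact apex_not_mem_segment (hfK c hc u hu) (hfK c hc v hv)
          (hfnp u (mem_subT_ne_r hu)) (hfnp v (mem_subT_ne_r hv)) hmem
      · by_cases hwc : br w = c
        · have hwsub : w ∈ subT G r c := by rw [← hwc]; exact hbr2 w hwr
          have hrec2 := (hfc1 c hc).2.1 ⟨u, hu⟩ ⟨v, hv⟩ ⟨w, hwsub⟩
            (show (G.induce (↑(subT G r c) : Set V)).Adj ⟨u, hu⟩ ⟨v, hv⟩ from hadj)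
            (fun h => hwu (congrArg Subtype.val h))
            (fun h => hwv (congrArg Subtype.val h))
          rw [hfval c hc u hu, hfval c hc v hv, hfval c hc w hwsub] at hmem
          exact hrec2 hmem
        · have hKm : f w ∈ Kc c :=
            hsegK c _ _ (hfK c hc u hu) (hfK c hc v hv) hmem
          have hKw : f w ∈ Kc (br w) := hfK (br w) (hbr1 w hwr) w (hbr2 w hwr)
          exact hfnp w hwr (hKdisj (br w) (hbr1 w hwr) c hc hwc (f w) hKw hKm)
    have cond2 : ∀ u v w : V, G.Adj u v → w ≠ u → w ≠ v →
        f w ∉ segment ℝ (f u) (f v) := by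
      intro u v w hadj hwu hwv
      rcases edge_classify hG r hadj with h1 | h1 | ⟨c, hrc, hu, hv⟩
      · rw [h1] at hadj hwu ⊢
        exact key2A v ((G.mem_neighborFinset r v).2 hadj) w hwu hwv
      · rw [h1] at hadj hwv ⊢
        rw [segment_symm]
        exact key2A u ((G.mem_neighborFinset r u).2 hadj.symm) w hwv hwu
      · exact key2B c ((G.mem_neighborFinset r c).2 hrc) u v hu hv hadj w hwu hwv
    -- intersection condition
    have key3AA : ∀ (c : V) (hc : c ∈ nbrs) (c' : V) (hc' : c' ∈ nbrs), c ≠ c' →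
        segment ℝ (f r) (f c) ∩ segment ℝ (f r) (f c') =
          f '' {w | (w = r ∨ w = c) ∧ (w = r ∨ w = c')} := by
      intro c hc c' hc' hne
      apply Set.eq_of_subset_of_subset
      · rintro z ⟨hz1, hz2⟩
        rw [hfr] at hz1 hz2
        have h1 : z ∈ Kc c := hsegK c _ _ (hpKc c) (hfcK c hc) hz1
        have h2 : z ∈ Kc c' := hsegK c' _ _ (hpKc c') (hfcK c' hc') hz2
        have hz : z = p := hKdisj c hc c' hc' hne z h1 h2
        exact ⟨r, ⟨Or.inl rfl, Or.inl rfl⟩, by rw [hfr, hz]⟩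
      · rintro z ⟨w, ⟨hw1, hw2⟩, rfl⟩
        have hwr : w = r := by
          rcases hw1 with rfl | rfl
          · rfl
          · rcases hw2 with h | h
            · exact h
            · exact absurd h hne
        subst hwr
        exact ⟨left_mem_segment ℝ _ _, left_mem_segment ℝ _ _⟩
    have key3AB : ∀ (c : V) (hc : c ∈ nbrs) (c' : V) (hc' : c' ∈ nbrs) (u' v' : V)
        (hu' : u' ∈ subT G r c') (hv' : v' ∈ subT G r c'), G.Adj u' v' →
        segment ℝ (f r) (f c) ∩ segment ℝ (f u') (f v') =
          f '' {w | (w = r ∨ w = c) ∧ (w = u' ∨ w = v')} := by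
      intro c hc c' hc' u' v' hu' hv' hadj'
      have hu'r : u' ≠ r := mem_subT_ne_r hu'
      have hv'r : v' ≠ r := mem_subT_ne_r hv'
      by_cases hcc : c' = c
      · subst hcc
        have hflt_c : (f c').2 < p.2 := hflt c' (hnbrs_ne_r c' hc)
        have hsub1 : segment ℝ (f r) (f c') ∩ segment ℝ (f u') (f v') ⊆ {f c'} := by
          rintro z ⟨hz1, hz2⟩
          rw [hfr] at hz1
          have h1 := seg_snd_ge hflt_c hz1
          have h2 := seg_snd_le hz2
          have h3 : z.2 ≤ (f c').2 :=
            le_trans h2 (max_le (hble c' hc u' hu') (hble c' hc v' hv'))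
          exact Set.mem_singleton_iff.2 (h1.2 (le_antisymm h3 h1.1))
        by_cases hcu : c' = u'
        · subst hcu
          apply Set.eq_of_subset_of_subset
          · intro z hz
            have := hsub1 hz
            rw [Set.mem_singleton_iff] at this
            subst this
            exact ⟨c', ⟨Or.inr rfl, Or.inl rfl⟩, rfl⟩
          · rintro z ⟨w, ⟨hw1, hw2⟩, rfl⟩
            have hwc : w = c' := by
              rcases hw2 with h2 | h2
              · exact h2
              · rcases hw1 with h1 | h1
                · exact absurd (h2.symm.trans h1) hv'r
                · exact h1
            subst hwc
            exact ⟨right_mem_segment ℝ _ _, left_mem_segment ℝ _ _⟩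
        · by_cases hcv : c' = v'
          · subst hcv
            apply Set.eq_of_subset_of_subset
            · intro z hz
              have := hsub1 hz
              rw [Set.mem_singleton_iff] at this
              subst this
              exact ⟨c', ⟨Or.inr rfl, Or.inr rfl⟩, rfl⟩
            · rintro z ⟨w, ⟨hw1, hw2⟩, rfl⟩
              have hwc : w = c' := by
                rcases hw2 with h2 | h2
                · rcases hw1 with h1 | h1
                  · exact absurd (h2.symm.trans h1) hu'r
                  · exact h1
                · exact h2
              subst hwc
              exact ⟨right_mem_segment ℝ _ _, right_mem_segment ℝ _ _⟩
          · have hnotin : f c' ∉ segment ℝ (f u') (f v') := by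
              have hrec2 := (hfc1 c' hc).2.1 ⟨u', hu'⟩ ⟨v', hv'⟩ ⟨c', hcsub c' hc⟩
                (show (G.induce (↑(subT G r c') : Set V)).Adj ⟨u', hu'⟩ ⟨v', hv'⟩ from hadj')
                (fun h => hcu (congrArg Subtype.val h))
                (fun h => hcv (congrArg Subtype.val h))
              rw [hfval c' hc u' hu', hfval c' hc v' hv', hfval c' hc c' (hcsub c' hc)]
              exact hrec2
            apply Set.eq_of_subset_of_subset
            · intro z hz
              exfalso
              have := hsub1 hz
              rw [Set.mem_singleton_iff] at this
              subst this
              exact hnotin hz.2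
            · rintro z ⟨w, ⟨hw1, hw2⟩, rfl⟩
              exfalso
              rcases hw1 with rfl | rfl
              · rcases hw2 with rfl | rfl
                · exact hu'r rfl
                · exact hv'r rfl
              · rcases hw2 with rfl | rfl
                · exact hcu rfl
                · exact hcv rfl
      · -- different sectors
        apply Set.eq_of_subset_of_subset
        · rintro z ⟨hz1, hz2⟩
          exfalso
          rw [hfr] at hz1
          have h1 : z ∈ Kc c := hsegK c _ _ (hpKc c) (hfcK c hc) hz1
          have h2 : z ∈ Kc c' := hsegK c' _ _ (hfK c' hc' u' hu') (hfK c' hc' v' hv') hz2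
          have hz : z = p := hKdisj c hc c' hc' (fun h => hcc h.symm) z h1 h2
          subst hz
          exact apex_not_mem_segment (hfK c' hc' u' hu') (hfK c' hc' v' hv')
            (hfnp u' hu'r) (hfnp v' hv'r) hz2
        · rintro z ⟨w, ⟨hw1, hw2⟩, rfl⟩
          exfalso
          have hwsub : w ∈ subT G r c' := by
            rcases hw2 with rfl | rfl
            · exact hu'
            · exact hv'
          rcases hw1 with rfl | rfl
          · exact mem_subT_ne_r hwsub rfl
          · exact subT_disjoint hG (hadj_of_mem w hc) (hadj_of_mem c' hc')
              (fun h => hcc h.symm) (hcsub w hc) hwsub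
    have key3BB : ∀ (c : V) (hc : c ∈ nbrs) (c' : V) (hc' : c' ∈ nbrs) (u v u' v' : V)
        (hu : u ∈ subT G r c) (hv : v ∈ subT G r c) (hu' : u' ∈ subT G r c')
        (hv' : v' ∈ subT G r c'), G.Adj u v → G.Adj u' v' → s(u, v) ≠ s(u', v') →
        segment ℝ (f u) (f v) ∩ segment ℝ (f u') (f v') =
          f '' {w | (w = u ∨ w = v) ∧ (w = u' ∨ w = v')} := by
      intro c hc c' hc' u v u' v' hu hv hu' hv' hadj hadj' hsne
      by_cases hcc : c = c'
      · subst hcc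
        have hsym : s((⟨u, hu⟩ : {x // x ∈ (↑(subT G r c) : Set V)}), ⟨v, hv⟩)
            ≠ s((⟨u', hu'⟩ : {x // x ∈ (↑(subT G r c) : Set V)}), ⟨v', hv'⟩) := by
          intro h
          apply hsne
          have := congrArg (Sym2.map Subtype.val) h
          simpa [Sym2.map_pair_eq] using this
        have hrec3 := (hfc1 c hc).2.2 ⟨u, hu⟩ ⟨v, hv⟩ ⟨u', hu'⟩ ⟨v', hv'⟩
          (show (G.induce (↑(subT G r c) : Set V)).Adj ⟨u, hu⟩ ⟨v, hv⟩ from hadj)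
          (show (G.induce (↑(subT G r c) : Set V)).Adj ⟨u', hu'⟩ ⟨v', hv'⟩ from hadj')
          hsym
        rw [hfval c hc u hu, hfval c hc v hv, hfval c hc u' hu', hfval c hc v' hv', hrec3]
        apply Set.eq_of_subset_of_subset
        · rintro z ⟨w', ⟨h1, h2⟩, rfl⟩
          refine ⟨(w' : V), ⟨?_, ?_⟩, ?_⟩
          · rcases h1 with rfl | rfl
            · exact Or.inl rfl
            · exact Or.inr rfl
          · rcases h2 with rfl | rfl
            · exact Or.inl rfl
            · exact Or.inr rfl
          · rw [hfval c hc w'.1 w'.2]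
        · rintro z ⟨w, ⟨h1, h2⟩, rfl⟩
          have hwsub : w ∈ subT G r c := by
            rcases h1 with rfl | rfl
            · exact hu
            · exact hv
          refine ⟨⟨w, hwsub⟩, ⟨?_, ?_⟩, ?_⟩
          · rcases h1 with rfl | rfl
            · exact Or.inl (Subtype.ext rfl)
            · exact Or.inr (Subtype.ext rfl)
          · rcases h2 with rfl | rfl
            · exact Or.inl (Subtype.ext rfl)
            · exact Or.inr (Subtype.ext rfl)
          · rw [hfval c hc w hwsub]
      · apply Set.eq_of_subset_of_subset
        · rintro z ⟨hz1, hz2⟩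
          exfalso
          have h1 : z ∈ Kc c := hsegK c _ _ (hfK c hc u hu) (hfK c hc v hv) hz1
          have h2 : z ∈ Kc c' := hsegK c' _ _ (hfK c' hc' u' hu') (hfK c' hc' v' hv') hz2
          have hz : z = p := hKdisj c hc c' hc' hcc z h1 h2
          subst hz
          exact apex_not_mem_segment (hfK c hc u hu) (hfK c hc v hv)
            (hfnp u (mem_subT_ne_r hu)) (hfnp v (mem_subT_ne_r hv)) hz1
        · rintro z ⟨w, ⟨h1, h2⟩, rfl⟩
          exfalso
          have hwsub : w ∈ subT G r c := by
            rcases h1 with rfl | rfl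
            · exact hu
            · exact hv
          have hwsub' : w ∈ subT G r c' := by
            rcases h2 with rfl | rfl
            · exact hu'
            · exact hv'
          exact subT_disjoint hG (hadj_of_mem c hc) (hadj_of_mem c' hc') hcc hwsub hwsub'
    have key3A_any : ∀ (c : V) (hc : c ∈ nbrs) (u' v' : V), G.Adj u' v' →
        s(r, c) ≠ s(u', v') →
        segment ℝ (f r) (f c) ∩ segment ℝ (f u') (f v') =
          f '' {w | (w = r ∨ w = c) ∧ (w = u' ∨ w = v')} := by
      intro c hc u' v' h' hsne
      rcases edge_classify hG r h' with h1 | h1 | ⟨c', hrc', hu', hv'⟩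
      · rw [h1] at h' hsne ⊢
        exact key3AA c hc v' ((G.mem_neighborFinset r v').2 h') (fun hcv => hsne (by rw [hcv]))
      · rw [h1] at h' hsne ⊢
        rw [segment_symm (𝕜 := ℝ) (x := f u') (y := f r)]
        have hkey := key3AA c hc u' ((G.mem_neighborFinset r u').2 h'.symm)
          (fun hcu => hsne (by rw [hcu]; exact Sym2.eq_swap))
        rw [hkey]
        apply congrArg (Set.image f)
        ext w
        exact and_congr Iff.rfl or_comm
      · exact key3AB c hc c' ((G.mem_neighborFinset r c').2 hrc') u' v' hu' hv' h'
    have key3B_any : ∀ (c : V) (hc : c ∈ nbrs) (u v : V) (hu : u ∈ subT G r c)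
        (hv : v ∈ subT G r c), G.Adj u v → ∀ u' v' : V, G.Adj u' v' →
        s(u, v) ≠ s(u', v') →
        segment ℝ (f u) (f v) ∩ segment ℝ (f u') (f v') =
          f '' {w | (w = u ∨ w = v) ∧ (w = u' ∨ w = v')} := by
      intro c hc u v hu hv hadj u' v' h' hsne
      rcases edge_classify hG r h' with h1 | h1 | ⟨c', hrc', hu', hv'⟩
      · rw [h1] at h' ⊢
        rw [Set.inter_comm]
        rw [key3AB v' ((G.mem_neighborFinset r v').2 h') c hc u v hu hv hadj]
        apply congrArg (Set.image f)
        ext w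
        exact and_comm
      · rw [h1] at h' ⊢
        rw [Set.inter_comm, segment_symm (𝕜 := ℝ) (x := f u') (y := f r)]
        rw [key3AB u' ((G.mem_neighborFinset r u').2 h'.symm) c hc u v hu hv hadj]
        apply congrArg (Set.image f)
        ext w
        exact and_comm.trans (and_congr Iff.rfl or_comm)
      · exact key3BB c hc c' ((G.mem_neighborFinset r c').2 hrc') u v u' v'
          hu hv hu' hv' hadj h' hsne
    have cond3 : ∀ u v u' v' : V, G.Adj u v → G.Adj u' v' → s(u, v) ≠ s(u', v') →
        segment ℝ (f u) (f v) ∩ segment ℝ (f u') (f v') =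
          f '' {w | (w = u ∨ w = v) ∧ (w = u' ∨ w = v')} := by
      intro u v u' v' h h' hsne
      rcases edge_classify hG r h with h1 | h1 | ⟨c, hrc, hu, hv⟩
      · rw [h1] at h hsne ⊢
        exact key3A_any v ((G.mem_neighborFinset r v).2 h) u' v' h' hsne
      · rw [h1] at h hsne ⊢
        rw [segment_symm (𝕜 := ℝ) (x := f u) (y := f r)]
        rw [key3A_any u ((G.mem_neighborFinset r u).2 h.symm) u' v' h'
          (fun hh => hsne (by rw [← hh]; exact Sym2.eq_swap))]
        apply congrArg (Set.image f)
        ext w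
        exact and_congr or_comm Iff.rfl
      · exact key3B_any c ((G.mem_neighborFinset r c).2 hrc) u v hu hv h u' v' h' hsne
    -- upward
    have cond_up : ∀ u v : V, IsParent G r u v → (f v).2 < (f u).2 := by
      intro u v hp
      have hvr : v ≠ r := parent_ne_root hG hp
      by_cases hur : u = r
      · subst hur
        rw [hfr]
        exact hflt v hvr
      · obtain ⟨c, hrc, hu, hv⟩ := parent_in_subT hG hp hur
        have hc : c ∈ nbrs := (G.mem_neighborFinset r c).2 hrc
        have hup := hfc2 c hc ⟨u, hu⟩ ⟨v, hv⟩ (parent_transfer hG hrc hu hv hp)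
        rw [hfval c hc u hu, hfval c hc v hv]
        exact hup
    exact ⟨f, ⟨hinj, cond2, cond3⟩, cond_up, hfS, fun v hv => by rw [hfr]; exact hflt v hv⟩


end MainLemma

noncomputable section FinalAssembly

lemma drawing_shear {V : Type} (G : SimpleGraph V) (f : V → ℝ × ℝ) (ε : ℝ)
    (h : IsStraightLineDrawing G f) :
    IsStraightLineDrawing G (fun v => shear ε (f v)) := by
  obtain ⟨h1, h2, h3⟩ := h
  refine ⟨fun a b hab => h1 (shear_injective ε hab), ?_, ?_⟩
  · intro u v w hadj hwu hwv hmem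
    exact h2 u v w hadj hwu hwv ((shear_mem_segment ε _ _ _).1 hmem)
  · intro u v u' v' hadj hadj' hsne
    rw [shear_image_segment, shear_image_segment, ← Set.image_inter (shear_injective ε),
      h3 u v u' v' hadj hadj' hsne, ← Set.image_comp]
    rfl

end FinalAssembly

/-- Fact 2: a point set of size `(ℓ−1)n − ℓ + 2` with no `ℓ` collinear points is universal
for straight-line upward drawings of rooted trees of size `n`. -/
theorem stmt3 (ℓ n : ℕ) (hℓ : 3 ≤ ℓ) (hn : 1 ≤ n)
    (P : Finset (ℝ × ℝ)) (hPcard : (P.card : ℤ) = ((ℓ : ℤ) - 1) * n - ℓ + 2)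
    (hgen : ∀ Q : Finset (ℝ × ℝ), Q ⊆ P → ℓ ≤ Q.card → ¬ Collinear ℝ (Q : Set (ℝ × ℝ)))
    (V : Type) [Fintype V] (G : SimpleGraph V) (hG : G.IsTree)
    (hcard : Fintype.card V = n) (r : V) :
    ∃ f : V → ℝ × ℝ, IsStraightLineDrawing G f ∧ IsUpward G r f ∧ ∀ v : V, f v ∈ P := by
  classical
  obtain ⟨ε, hε, hshear⟩ := exists_good_shear P
  set S : Finset (ℝ × ℝ) := P.image (shear ε) with hS
  have hScard : S.card = P.card := Finset.card_image_of_injective P (shear_injective ε)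
  have hcardN : P.card + ℓ = (ℓ - 1) * n + 2 := by
    have h0 : (((ℓ - 1) * n + 2 : ℕ) : ℤ) = ((ℓ : ℤ) - 1) * n + 2 := by
      push_cast [Nat.cast_sub (show 1 ≤ ℓ by omega)]
      ring
    have h1 : ((P.card : ℤ) + (ℓ : ℤ)) = (((ℓ - 1) * n + 2 : ℕ) : ℤ) := by
      rw [h0]
      linarith
    exact_mod_cast h1
  have hgenS : ∀ Q : Finset (ℝ × ℝ), Q ⊆ S → ℓ ≤ Q.card → ¬ Collinear ℝ (Q : Set (ℝ × ℝ)) := by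
    intro Q hQ hQc hcol
    set Q0 := Q.image (shear (-ε)) with hQ0
    have hQ0P : Q0 ⊆ P := by
      intro z hz
      obtain ⟨q, hq, rfl⟩ := Finset.mem_image.1 hz
      obtain ⟨x, hx, hxe⟩ := Finset.mem_image.1 (hQ hq)
      rw [← hxe, shear_shear]
      exact hx
    have hQ0c : ℓ ≤ Q0.card := by
      rw [hQ0, Finset.card_image_of_injective Q (shear_injective (-ε))]
      exact hQc
    apply hgen Q0 hQ0P hQ0c
    rw [hQ0, Finset.coe_image]
    exact shear_collinear hcol
  have hdistyS : ∀ a ∈ S, ∀ b ∈ S, a.2 = b.2 → a = b := by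
    intro a ha b hb hab
    obtain ⟨x, hx, rfl⟩ := Finset.mem_image.1 ha
    obtain ⟨y, hy, rfl⟩ := Finset.mem_image.1 hb
    by_contra hne
    have hxy : x ≠ y := fun h => hne (by rw [h])
    rcases lt_trichotomy x.2 y.2 with h | h | h
    · exact absurd hab (ne_of_lt (hshear x hx y hy h))
    · have hx1 : x.1 ≠ y.1 := fun h1 => hxy (Prod.ext h1 h)
      apply hx1
      have h2 : x.2 + ε * x.1 = y.2 + ε * y.1 := hab
      exact mul_left_cancel₀ (ne_of_gt hε) (by linarith : ε * x.1 = ε * y.1)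
    · exact absurd hab.symm (ne_of_lt (hshear y hy x hx h))
  obtain ⟨f', hdraw, hup, hmem, -⟩ := lemA ℓ hℓ n hn S (by rw [hScard]; exact hcardN)
    hgenS hdistyS V G hG hcard r
  have hP : ∀ x : V, shear (-ε) (f' x) ∈ P := by
    intro x
    obtain ⟨y, hy, hye⟩ := Finset.mem_image.1 (hmem x)
    rw [← hye, shear_shear]
    exact hy
  refine ⟨fun v => shear (-ε) (f' v), drawing_shear G f' (-ε) hdraw, ?_, hP⟩
  intro u v hp
  have h1 := hup u v hp
  by_contra hcon
  push_neg at hcon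
  have h2 := hshear _ (hP u) _ (hP v) hcon
  rw [shear_shear', shear_shear'] at h2
  linarith
end

section
/- Let u, v ∈ ℝ² be linearly independent vectors. Then there exist vectors u', v' ∈ ℝ² generating the same lattice, i.e., {i·u' + j·v' : i, j ∈ ℤ} = {i·u + j·v : i, j ∈ ℤ}, such that |⟨u', v'⟩| ≤ (1/2)·‖u'‖·‖v'‖, where ⟨·,·⟩ and ‖·‖ are the Euclidean inner product and norm (equivalently, the angle between u' and v' lies between 60° and 120°). -/
open scoped RealInnerProductSpace

open Submodule in
private lemma gauss_finite (u v : EuclideanSpace ℝ (Fin 2))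
    (h : LinearIndependent ℝ ![u, v]) (R : ℝ) :
    {w : EuclideanSpace ℝ (Fin 2) | (∃ i j : ℤ, w = i • u + j • v) ∧ ‖w‖ ≤ R}.Finite := by
  have hb : Fintype.card (Fin 2) = Module.finrank ℝ (EuclideanSpace ℝ (Fin 2)) := by
    simp [finrank_euclideanSpace]
  set b := basisOfLinearIndependentOfCardEqFinrank h hb with hbdef
  have hbe : ⇑b = ![u, v] := coe_basisOfLinearIndependentOfCardEqFinrank _ _
  have hu : u ∈ span ℤ (Set.range ⇑b) := by
    apply subset_span; exact ⟨0, by rw [hbe]; rfl⟩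
  have hv : v ∈ span ℤ (Set.range ⇑b) := by
    apply subset_span; exact ⟨1, by rw [hbe]; rfl⟩
  have hsub : {w : EuclideanSpace ℝ (Fin 2) | (∃ i j : ℤ, w = i • u + j • v) ∧ ‖w‖ ≤ R}
      ⊆ (span ℤ (Set.range ⇑b) : Set (EuclideanSpace ℝ (Fin 2))) ∩ Metric.closedBall 0 R := by
    rintro w ⟨⟨i, j, rfl⟩, hw⟩
    exact ⟨add_mem (smul_mem _ i hu) (smul_mem _ j hv), by simpa using hw⟩
  refine Set.Finite.subset ?_ hsub
  have hclosed : IsClosed (↑(span ℤ (Set.range ⇑b)) : Set (EuclideanSpace ℝ (Fin 2))) := by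
    have : DiscreteTopology (span ℤ (Set.range ⇑b)).toAddSubgroup := inferInstance
    exact AddSubgroup.isClosed_of_discrete (H := (span ℤ (Set.range ⇑b)).toAddSubgroup)
  have hcpt : IsCompact ((span ℤ (Set.range ⇑b) : Set (EuclideanSpace ℝ (Fin 2))) ∩ Metric.closedBall 0 R) :=
    (isCompact_closedBall (0 : EuclideanSpace ℝ (Fin 2)) R).inter_left hclosed
  have hdisc : DiscreteTopology
      ↥((span ℤ (Set.range ⇑b) : Set (EuclideanSpace ℝ (Fin 2))) ∩ Metric.closedBall 0 R) :=
    DiscreteTopology.of_subset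
      (inferInstance : DiscreteTopology (span ℤ (Set.range ⇑b)))
      Set.inter_subset_left
  exact hcpt.finite (isDiscrete_iff_discreteTopology.mpr hdisc)

private lemma gauss_swap (u v : EuclideanSpace ℝ (Fin 2)) :
    {p : EuclideanSpace ℝ (Fin 2) | ∃ i j : ℤ, p = i • v + j • u} =
      {p : EuclideanSpace ℝ (Fin 2) | ∃ i j : ℤ, p = i • u + j • v} := by
  ext p
  constructor
  · rintro ⟨i, j, rfl⟩; exact ⟨j, i, by rw [add_comm]⟩
  · rintro ⟨i, j, rfl⟩; exact ⟨j, i, by rw [add_comm]⟩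

private lemma gauss_shear (u v : EuclideanSpace ℝ (Fin 2)) (k : ℤ) :
    {p : EuclideanSpace ℝ (Fin 2) | ∃ i j : ℤ, p = i • u + j • (v - k • u)} =
      {p : EuclideanSpace ℝ (Fin 2) | ∃ i j : ℤ, p = i • u + j • v} := by
  ext p
  constructor
  · rintro ⟨i, j, rfl⟩
    refine ⟨i - j * k, j, ?_⟩
    module
  · rintro ⟨i, j, rfl⟩
    refine ⟨i + j * k, j, ?_⟩
    module

private lemma gauss_key : ∀ n : ℕ, ∀ u v : EuclideanSpace ℝ (Fin 2),
    LinearIndependent ℝ ![u, v] → ‖u‖ ≤ ‖v‖ →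
    ({w : EuclideanSpace ℝ (Fin 2) |
        (∃ i j : ℤ, w = i • u + j • v) ∧ ‖w‖ ≤ ‖u‖}).ncard ≤ n →
    ∃ u' v' : EuclideanSpace ℝ (Fin 2),
      {p : EuclideanSpace ℝ (Fin 2) | ∃ i j : ℤ, p = i • u' + j • v'} =
        {p : EuclideanSpace ℝ (Fin 2) | ∃ i j : ℤ, p = i • u + j • v} ∧
      |⟪u', v'⟫| ≤ (1 / 2) * ‖u'‖ * ‖v'‖ := by
  intro n
  induction n with
  | zero =>
    intro u v h _ hcard
    exfalso
    have hfin := gauss_finite u v h ‖u‖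
    have humem : u ∈ {w : EuclideanSpace ℝ (Fin 2) |
        (∃ i j : ℤ, w = i • u + j • v) ∧ ‖w‖ ≤ ‖u‖} :=
      ⟨⟨1, 0, by simp⟩, le_refl _⟩
    have := Set.ncard_pos hfin |>.mpr ⟨u, humem⟩
    omega
  | succ n ih =>
    intro u v h hle hcard
    have hu0 : u ≠ 0 := h.ne_zero 0
    have hun : (0 : ℝ) < ‖u‖ := norm_pos_iff.mpr hu0
    set x : ℝ := ⟪u, v⟫ / (‖u‖ ^ 2) with hx
    set k : ℤ := round x with hk
    set v' : EuclideanSpace ℝ (Fin 2) := v - k • u with hv'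
    have hinner : ⟪u, v'⟫ = (x - k) * ‖u‖ ^ 2 := by
      rw [hv', inner_sub_right, ← Int.cast_smul_eq_zsmul ℝ, real_inner_smul_right,
        real_inner_self_eq_norm_sq, hx]
      field_simp
    have hinner_le : |⟪u, v'⟫| ≤ (1 / 2) * ‖u‖ ^ 2 := by
      rw [hinner, abs_mul, abs_of_nonneg (by positivity : (0:ℝ) ≤ ‖u‖ ^ 2)]
      have := abs_sub_round x
      nlinarith [sq_nonneg ‖u‖]
    have hli' : LinearIndependent ℝ ![u, v'] := by
      rw [LinearIndependent.pair_iff] at h ⊢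
      intro s t hst
      have : (s - t * (k : ℝ)) • u + t • v = 0 := by
        rw [hv', ← Int.cast_smul_eq_zsmul ℝ] at hst
        rw [← hst]; module
      obtain ⟨h1, h2⟩ := h _ _ this
      constructor
      · have : s - t * k = 0 := h1
        rw [h2] at this; simpa using this
      · exact h2
    rcases le_or_gt ‖u‖ ‖v'‖ with hcase | hcase
    · refine ⟨u, v', gauss_shear u v k, ?_⟩
      calc |⟪u, v'⟫| ≤ (1 / 2) * ‖u‖ ^ 2 := hinner_le
        _ = (1 / 2) * ‖u‖ * ‖u‖ := by ring
        _ ≤ (1 / 2) * ‖u‖ * ‖v'‖ := by nlinarith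
    · -- recurse on (v', u)
      have hli'' : LinearIndependent ℝ ![v', u] := by
        rw [LinearIndependent.pair_iff] at hli' ⊢
        intro s t hst
        obtain ⟨h1, h2⟩ := hli' t s (by rw [← hst]; module)
        exact ⟨h2, h1⟩
      have hset1 : {p : EuclideanSpace ℝ (Fin 2) | ∃ i j : ℤ, p = i • v' + j • u} =
          {p : EuclideanSpace ℝ (Fin 2) | ∃ i j : ℤ, p = i • u + j • v} := by
        rw [gauss_swap u v', hv', gauss_shear u v k]
      have hsubset : {w : EuclideanSpace ℝ (Fin 2) |
            (∃ i j : ℤ, w = i • v' + j • u) ∧ ‖w‖ ≤ ‖v'‖} ⊂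
          {w : EuclideanSpace ℝ (Fin 2) |
            (∃ i j : ℤ, w = i • u + j • v) ∧ ‖w‖ ≤ ‖u‖} := by
        constructor
        · rintro w ⟨hw1, hw2⟩
          have : w ∈ {p : EuclideanSpace ℝ (Fin 2) | ∃ i j : ℤ, p = i • u + j • v} := by
            rw [← hset1]; exact hw1
          exact ⟨this, hw2.trans hcase.le⟩
        · intro hsub
          have humem : u ∈ {w : EuclideanSpace ℝ (Fin 2) |
              (∃ i j : ℤ, w = i • u + j • v) ∧ ‖w‖ ≤ ‖u‖} :=
            ⟨⟨1, 0, by simp⟩, le_refl _⟩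
          obtain ⟨-, hle'⟩ := hsub humem
          exact absurd hle' (not_le.mpr hcase)
      have hcard' : ({w : EuclideanSpace ℝ (Fin 2) |
          (∃ i j : ℤ, w = i • v' + j • u) ∧ ‖w‖ ≤ ‖v'‖}).ncard ≤ n := by
        have hlt := Set.ncard_lt_ncard hsubset (gauss_finite u v h ‖u‖)
        omega
      obtain ⟨u', v'', hs, hineq⟩ := ih v' u hli'' hcase.le hcard'
      exact ⟨u', v'', hs.trans hset1, hineq⟩

/-- Gauss basis reduction: every two-dimensional lattice has a basis `{u', v'}` with
`|⟨u', v'⟩| ≤ (1/2)·‖u'‖·‖v'‖`, i.e. the angle between `u'` and `v'` lies between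
`60°` and `120°`. -/
theorem stmt9 (u v : EuclideanSpace ℝ (Fin 2))
    (h : LinearIndependent ℝ ![u, v]) :
    ∃ u' v' : EuclideanSpace ℝ (Fin 2),
      {p : EuclideanSpace ℝ (Fin 2) | ∃ i j : ℤ, p = i • u' + j • v'} =
        {p : EuclideanSpace ℝ (Fin 2) | ∃ i j : ℤ, p = i • u + j • v} ∧
      |⟪u', v'⟫| ≤ (1 / 2) * ‖u'‖ * ‖v'‖ := by
  rcases le_total ‖u‖ ‖v‖ with hle | hle
  · exact gauss_key _ u v h hle le_rfl
  · have hswap : LinearIndependent ℝ ![v, u] := by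
      rw [LinearIndependent.pair_iff] at h ⊢
      intro s t hst
      obtain ⟨h1, h2⟩ := h t s (by rw [← hst]; module)
      exact ⟨h2, h1⟩
    obtain ⟨u', v', hs, hineq⟩ := gauss_key _ v u hswap hle le_rfl
    exact ⟨u', v', hs.trans (gauss_swap u v), hineq⟩
end

section
/- Let A ≥ 1 be an integer and c ≥ 0 a real number. Suppose W : ℕ → ℝ satisfies W(n) ≤ c·A for all integers 1 ≤ n ≤ A, and for every integer n > A, W(n) ≤ max{c·A, W(⌈n/2⌉) + 1, W(n − A)}. Then W(n) ≤ c·A + 2·log₂ n for every integer n ≥ 1. -/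
/-- The width recurrence: if `W(n) ≤ c·A` for `1 ≤ n ≤ A` and
`W(n) ≤ max{c·A, W(⌈n/2⌉) + 1, W(n − A)}` for `n > A`, then
`W(n) ≤ c·A + 2·log₂ n` for all `n ≥ 1`. -/
theorem stmt16 (A : ℕ) (hA : 1 ≤ A) (c : ℝ) (hc : 0 ≤ c) (W : ℕ → ℝ)
    (hbase : ∀ n : ℕ, 1 ≤ n → n ≤ A → W n ≤ c * A)
    (hrec : ∀ n : ℕ, A < n →
      W n ≤ max (c * A) (max (W ((n + 1) / 2) + 1) (W (n - A)))) :
    ∀ n : ℕ, 1 ≤ n → W n ≤ c * A + 2 * Real.logb 2 n := by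
  intro n
  induction n using Nat.strong_induction_on with
  | _ n ih =>
    intro hn
    have hn1 : (1:ℝ) ≤ (n:ℝ) := by exact_mod_cast hn
    have hlogn : 0 ≤ Real.logb 2 n := Real.logb_nonneg (by norm_num) hn1
    by_cases hnA : n ≤ A
    · have := hbase n hn hnA
      linarith
    · push_neg at hnA
      have h2 : 2 ≤ n := by omega
      set m := (n + 1) / 2 with hm_def
      have hm_lt : m < n := by omega
      have hm1 : 1 ≤ m := by omega
      have hih1 := ih m hm_lt hm1
      -- key inequality 2*m^2 ≤ n^2
      have hsq : 2 * m ^ 2 ≤ n ^ 2 := by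
        have h2m : 2 * m ≤ n + 1 := by omega
        rcases eq_or_lt_of_le h2 with h | h
        · subst h; simp [hm_def]
        · have h3 : 3 ≤ n := h
          nlinarith
      have hsqR : (2:ℝ) * (m:ℝ) ^ 2 ≤ (n:ℝ) ^ 2 := by exact_mod_cast hsq
      have hmpos : (0:ℝ) < (m:ℝ) := by exact_mod_cast hm1
      have hnpos : (0:ℝ) < (n:ℝ) := by linarith
      have hkey : 2 * Real.logb 2 (m:ℝ) + 1 ≤ 2 * Real.logb 2 (n:ℝ) := by
        have hmono : Real.logb 2 ((2:ℝ) * (m:ℝ) ^ 2) ≤ Real.logb 2 ((n:ℝ) ^ 2) :=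
          Real.logb_le_logb_of_le (by norm_num) (by positivity) hsqR
        rw [Real.logb_mul (by norm_num) (by positivity), Real.logb_pow,
          Real.logb_pow, Real.logb_self_eq_one (by norm_num)] at hmono
        push_cast at hmono ⊢
        linarith
      -- third branch
      have hsub1 : 1 ≤ n - A := by omega
      have hsub_lt : n - A < n := by omega
      have hih2 := ih (n - A) hsub_lt hsub1
      have hsubR : ((n - A : ℕ) : ℝ) ≤ (n:ℝ) := by
        exact_mod_cast Nat.sub_le n A
      have hmono2 : Real.logb 2 ((n - A : ℕ) : ℝ) ≤ Real.logb 2 (n:ℝ) :=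
        Real.logb_le_logb_of_le (by norm_num) (by exact_mod_cast hsub1) hsubR
      have hrecn := hrec n hnA
      refine le_trans hrecn (max_le (by linarith) (max_le ?_ ?_))
      · linarith
      · linarith
end

section
/- Let c ≥ 1 be a real number and let W : ℕ → ℝ be nonnegative and nondecreasing with W(1) ≤ c and, for every integer n ≥ 2, W(n) ≤ 2·W(⌈n / 2^{√(2·log₂ n)}⌉) + c·2^{√(2·log₂ n)}. Then there exists a constant C > 0 (depending only on c) such that W(n) ≤ C·2^{√(2·log₂ n)}·√(log₂ n) for every integer n ≥ 2. -/
open Real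

lemma two_rpow_le_one_add {x : ℝ} (h0 : 0 ≤ x) (h1 : x ≤ 1) : (2:ℝ)^x ≤ 1 + x := by
  have h := convexOn_exp.2 (Set.mem_univ (0:ℝ)) (Set.mem_univ (Real.log 2))
    (by linarith : (0:ℝ) ≤ 1 - x) h0 (by ring)
  simp only [smul_eq_mul, mul_zero, zero_add, Real.exp_zero,
    Real.exp_log (by norm_num : (0:ℝ)<2)] at h
  rw [Real.rpow_def_of_pos (by norm_num)]
  calc Real.exp (Real.log 2 * x) = Real.exp (x * Real.log 2) := by ring_nf
    _ ≤ (1-x)*1 + x*2 := h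
    _ = 1 + x := by ring

set_option maxHeartbeats 1000000 in
lemma crude18 (c : ℝ) (hc : 1 ≤ c) (W : ℕ → ℝ)
    (hnonneg : ∀ n : ℕ, 0 ≤ W n) (hmono : ∀ m n : ℕ, m ≤ n → W m ≤ W n)
    (hbase : W 1 ≤ c)
    (hrec : ∀ n : ℕ, 2 ≤ n →
      W n ≤ 2 * W ⌈(n : ℝ) / (2 : ℝ) ^ Real.sqrt (2 * Real.logb 2 n)⌉₊ +
        c * (2 : ℝ) ^ Real.sqrt (2 * Real.logb 2 n)) :
    ∀ n : ℕ, 1 ≤ n → W n ≤ 2 * c * (n:ℝ)^2 := by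
  intro n
  induction n using Nat.strong_induction_on with
  | _ n ih =>
  intro hn1
  rcases eq_or_lt_of_le hn1 with h1 | h2
  · rw [← h1]; push_cast; nlinarith
  -- now 2 ≤ n
  have hn2 : 2 ≤ n := h2
  have hn0 : (0:ℝ) < n := by positivity
  obtain ⟨L, hLdef⟩ : ∃ L, Real.logb 2 (n:ℝ) = L := ⟨_, rfl⟩
  obtain ⟨s, hsdef⟩ : ∃ s, Real.sqrt (2*L) = s := ⟨_, rfl⟩
  obtain ⟨t, htdef⟩ : ∃ t, (2:ℝ)^s = t := ⟨_, rfl⟩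
  have hL1 : 1 ≤ L := by
    rw [← hLdef]
    have := Real.logb_le_logb_of_le (show (1:ℝ)<2 by norm_num) (show (0:ℝ)<2 by norm_num)
      (show (2:ℝ) ≤ n by exact_mod_cast hn2)
    simpa using this
  have hL0 : 0 ≤ 2*L := by linarith only [hL1]
  have hs2 : s^2 = 2*L := by rw [← hsdef]; exact Real.sq_sqrt hL0
  have hs0 : 0 ≤ s := by rw [← hsdef]; exact Real.sqrt_nonneg _
  have ht0 : (0:ℝ) < t := by rw [← htdef]; exact Real.rpow_pos_of_pos (by norm_num) _
  have hnL : (2:ℝ)^L = n := by rw [← hLdef]; exact Real.rpow_logb (by norm_num) (by norm_num) hn0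
  obtain ⟨m, hmdef⟩ : ∃ m : ℕ, ⌈(n:ℝ)/t⌉₊ = m := ⟨_, rfl⟩
  have hrecn := hrec n hn2
  rw [hLdef, hsdef, htdef, hmdef] at hrecn
  by_cases hn3 : n ≤ 3
  · -- n = 2 or 3
    have hL2 : L ≤ 2 := by
      rw [← hLdef]
      have := Real.logb_le_logb_of_le (show (1:ℝ)<2 by norm_num) hn0
        (show (n:ℝ) ≤ 4 by exact_mod_cast (by omega : n ≤ 4))
      calc Real.logb 2 (n:ℝ) ≤ Real.logb 2 4 := this
        _ = 2 := by
          rw [show (4:ℝ) = 2^(2:ℕ) by norm_num, Real.logb_pow]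
          simp [Real.logb_self_eq_one]
    have hsL : L ≤ s := by
      rw [← hsdef]
      have : L = Real.sqrt (L^2) := (Real.sqrt_sq (by linarith)).symm
      nlinarith [Real.sqrt_le_sqrt (show L^2 ≤ 2*L by nlinarith), this]
    have hsle2 : s ≤ 2 := by nlinarith
    have htn : (n:ℝ) ≤ t := by
      rw [← hnL, ← htdef]
      exact Real.rpow_le_rpow_left_iff (by norm_num : (1:ℝ)<2) |>.mpr hsL
    have ht4 : t ≤ 4 := by
      rw [← htdef]
      calc (2:ℝ)^s ≤ (2:ℝ)^(2:ℝ) :=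
            Real.rpow_le_rpow_left_iff (by norm_num : (1:ℝ)<2) |>.mpr hsle2
        _ = 4 := by
          rw [show (2:ℝ) = ((2:ℕ):ℝ) by norm_num]
          rw [Real.rpow_natCast]; norm_num
    have hm1 : m ≤ 1 := by
      rw [← hmdef]
      exact Nat.ceil_le.mpr (by push_cast; rw [div_le_one ht0]; exact htn)
    have hWm : W m ≤ c := le_trans (hmono m 1 hm1) hbase
    have : W n ≤ 2*c + c*4 := by nlinarith
    have hn2' : (2:ℝ) ≤ n := by exact_mod_cast hn2
    nlinarith [mul_nonneg (show (0:ℝ) ≤ c by linarith) (show (0:ℝ) ≤ (n:ℝ)^2 - 4 by nlinarith)]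
  · -- n ≥ 4
    have hn4 : 4 ≤ n := by omega
    have hn4' : (4:ℝ) ≤ n := by exact_mod_cast hn4
    have hL2 : 2 ≤ L := by
      rw [← hLdef]
      have := Real.logb_le_logb_of_le (show (1:ℝ)<2 by norm_num) (show (0:ℝ)<4 by norm_num) hn4'
      calc (2:ℝ) = Real.logb 2 4 := by
            rw [show (4:ℝ) = 2^(2:ℕ) by norm_num, Real.logb_pow]
            simp [Real.logb_self_eq_one]
        _ ≤ Real.logb 2 (n:ℝ) := this
    have hsL : s ≤ L := by
      rw [← hsdef]
      have : L = Real.sqrt (L^2) := (Real.sqrt_sq (by linarith)).symm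
      nlinarith [Real.sqrt_le_sqrt (show 2*L ≤ L^2 by nlinarith), this]
    have hs2' : 2 ≤ s := by nlinarith
    have ht4 : (4:ℝ) ≤ t := by
      rw [← htdef]
      calc (4:ℝ) = (2:ℝ)^(2:ℝ) := by
            rw [show (2:ℝ) = ((2:ℕ):ℝ) by norm_num]
            rw [Real.rpow_natCast]; norm_num
        _ ≤ (2:ℝ)^s := Real.rpow_le_rpow_left_iff (by norm_num : (1:ℝ)<2) |>.mpr hs2'
    have htn : t ≤ (n:ℝ) := by
      rw [← hnL, ← htdef]
      exact Real.rpow_le_rpow_left_iff (by norm_num : (1:ℝ)<2) |>.mpr hsL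
    have hmub : (m:ℝ) < (n:ℝ)/t + 1 := by
      rw [← hmdef]; exact Nat.ceil_lt_add_one (by positivity)
    have hm0 : (0:ℝ) ≤ m := by positivity
    have hnt : (n:ℝ)/t*t = n := div_mul_cancel₀ _ (ne_of_gt ht0)
    have hmt : (m:ℝ) * t ≤ 2 * n := by
      have h1t : (1:ℝ) ≤ (n:ℝ)/t := by rw [le_div_iff₀ ht0]; linarith
      have hm2t : (m:ℝ) ≤ 2*((n:ℝ)/t) := by linarith
      calc (m:ℝ)*t ≤ (2*((n:ℝ)/t))*t := mul_le_mul_of_nonneg_right hm2t (le_of_lt ht0)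
        _ = 2*n := by rw [mul_assoc, hnt]
    have hmn : m < n := by
      have h4m : (m:ℝ)*4 ≤ 2*n := by nlinarith [mul_le_mul_of_nonneg_left ht4 hm0]
      have : (m:ℝ) < (n:ℝ) := by linarith
      exact_mod_cast this
    have hm1 : 1 ≤ m := by
      rw [← hmdef]
      exact Nat.one_le_ceil_iff.mpr (by positivity)
    have hWm := ih m hmn hm1
    have hm4 : (m:ℝ) ≤ (n:ℝ)/2 := by nlinarith [mul_le_mul_of_nonneg_left ht4 hm0]
    have hmsq : (m:ℝ)^2 ≤ (n:ℝ)^2/4 := by nlinarith [mul_self_le_mul_self hm0 hm4]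
    have hc0 : (0:ℝ) ≤ c := by linarith
    nlinarith [hnonneg m, mul_le_mul_of_nonneg_left hmsq (show (0:ℝ) ≤ 4*c by linarith),
      mul_le_mul_of_nonneg_left htn hc0,
      mul_nonneg hc0 (show (0:ℝ) ≤ (n:ℝ)^2 - (n:ℝ) by nlinarith)]

set_option maxHeartbeats 2000000 in
set_option maxRecDepth 8000 in
/-- The width recurrence for the orthogonal order-preserving algorithm: if `W` is
nonnegative, nondecreasing, `W(1) ≤ c`, and
`W(n) ≤ 2·W(⌈n / 2^{√(2 log₂ n)}⌉) + c·2^{√(2 log₂ n)}` for all `n ≥ 2`, then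
`W(n) = O(2^{√(2 log₂ n)}·√(log₂ n))`. -/
theorem stmt18 (c : ℝ) (hc : 1 ≤ c) (W : ℕ → ℝ)
    (hnonneg : ∀ n : ℕ, 0 ≤ W n) (hmono : ∀ m n : ℕ, m ≤ n → W m ≤ W n)
    (hbase : W 1 ≤ c)
    (hrec : ∀ n : ℕ, 2 ≤ n →
      W n ≤ 2 * W ⌈(n : ℝ) / (2 : ℝ) ^ Real.sqrt (2 * Real.logb 2 n)⌉₊ +
        c * (2 : ℝ) ^ Real.sqrt (2 * Real.logb 2 n)) :
    ∃ C : ℝ, 0 < C ∧ ∀ n : ℕ, 2 ≤ n →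
      W n ≤ C * (2 : ℝ) ^ Real.sqrt (2 * Real.logb 2 n) * Real.sqrt (Real.logb 2 n) := by
  have hc0 : (0:ℝ) < c := by linarith only [hc]
  obtain ⟨C, hCdef⟩ : ∃ C : ℝ, c*(2:ℝ)^(402:ℕ) = C := ⟨_, rfl⟩
  have hC0 : (0:ℝ) < C := by rw [← hCdef]; positivity
  have hC4 : 4*c ≤ C := by
    rw [← hCdef]
    calc 4*c = c*4 := by ring
      _ ≤ c*(2:ℝ)^(402:ℕ) :=
          mul_le_mul_of_nonneg_left (by rw [show (4:ℝ) = 2^(2:ℕ) by norm_num]; exact pow_le_pow_right₀ (by norm_num) (by norm_num)) hc0.le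
  have hC2400 : 2*c*((2:ℝ)^(200:ℕ))^2 ≤ C := by
    have e : ((2:ℝ)^(200:ℕ))^2 * 4 = (2:ℝ)^(402:ℕ) := by
      rw [← pow_mul, show (402:ℕ) = 200*2 + 2 from rfl, pow_add]; norm_num
    calc 2*c*((2:ℝ)^(200:ℕ))^2 = c * (((2:ℝ)^(200:ℕ))^2 * 2) := by ring
      _ ≤ c * (((2:ℝ)^(200:ℕ))^2 * 4) := by
          refine mul_le_mul_of_nonneg_left ?_ hc0.le
          refine mul_le_mul_of_nonneg_left (by norm_num) (by positivity)
      _ = c * (2:ℝ)^(402:ℕ) := by rw [e]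
      _ = C := hCdef
  clear hCdef
  have hcrude := crude18 c hc W hnonneg hmono hbase hrec
  refine ⟨C, hC0, ?_⟩
  intro n
  induction n using Nat.strong_induction_on with
  | _ n ih =>
  intro hn2
  have hn0 : (0:ℝ) < n := by positivity
  obtain ⟨L, hLdef⟩ : ∃ L, Real.logb 2 (n:ℝ) = L := ⟨_, rfl⟩
  obtain ⟨s, hsdef⟩ : ∃ s, Real.sqrt (2*L) = s := ⟨_, rfl⟩
  obtain ⟨t, htdef⟩ : ∃ t, (2:ℝ)^s = t := ⟨_, rfl⟩
  obtain ⟨v, hvdef⟩ : ∃ v, Real.sqrt L = v := ⟨_, rfl⟩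
  rw [hLdef, hsdef, htdef, hvdef]
  have hL1 : 1 ≤ L := by
    rw [← hLdef]
    have := Real.logb_le_logb_of_le (show (1:ℝ)<2 by norm_num) (show (0:ℝ)<2 by norm_num)
      (show (2:ℝ) ≤ n by exact_mod_cast hn2)
    simpa using this
  have hL0 : 0 ≤ 2*L := by linarith only [hL1]
  have hs2 : s^2 = 2*L := by rw [← hsdef]; exact Real.sq_sqrt hL0
  have hs0 : 0 ≤ s := by rw [← hsdef]; exact Real.sqrt_nonneg _
  have ht0 : (0:ℝ) < t := by rw [← htdef]; exact Real.rpow_pos_of_pos (by norm_num) _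
  have hv2 : v^2 = L := by rw [← hvdef]; exact Real.sq_sqrt (by linarith only [hL1])
  have hv0 : 0 ≤ v := by rw [← hvdef]; exact Real.sqrt_nonneg _
  have hv1 : 1 ≤ v := by
    rw [← hvdef]
    have h := Real.sqrt_le_sqrt hL1
    simpa [Real.sqrt_one] using h
  have ht1 : (1:ℝ) ≤ t := by
    rw [← htdef]
    calc (1:ℝ) = (2:ℝ)^(0:ℝ) := (Real.rpow_zero 2).symm
      _ ≤ (2:ℝ)^s := Real.rpow_le_rpow_left_iff (by norm_num : (1:ℝ)<2) |>.mpr hs0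
  have hnL : (2:ℝ)^L = n := by
    rw [← hLdef]; exact Real.rpow_logb (by norm_num) (by norm_num) hn0
  by_cases hbig : 2^200 ≤ n
  case neg =>
    -- small case : n < 2^200
    have hcr := hcrude n (le_trans (by norm_num) hn2)
    push_neg at hbig
    have hnlt : (n:ℝ) ≤ (2:ℝ)^(200:ℕ) := by
      have h := le_of_lt hbig
      exact_mod_cast h
    have htv : (1:ℝ) ≤ t * v := by
      have h := mul_le_mul ht1 hv1 zero_le_one (by linarith only [ht1] : (0:ℝ) ≤ t)
      simpa using h
    calc W n ≤ 2*c*(n:ℝ)^2 := hcr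
      _ ≤ 2*c*((2:ℝ)^(200:ℕ))^2 := by
          refine mul_le_mul_of_nonneg_left ?_ (by linarith only [hc0] : (0:ℝ) ≤ 2*c)
          exact pow_le_pow_left₀ hn0.le hnlt 2
      _ ≤ C := hC2400
      _ = C * 1 := (mul_one C).symm
      _ ≤ C * (t*v) := mul_le_mul_of_nonneg_left htv hC0.le
      _ = C * t * v := by ring
  case pos =>
    -- big case : n ≥ 2^200
    have hL200 : 200 ≤ L := by
      rw [← hLdef]
      have hcast : ((2:ℝ))^(200:ℕ) ≤ (n:ℝ) := by exact_mod_cast hbig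
      have := Real.logb_le_logb_of_le (show (1:ℝ)<2 by norm_num)
        (show (0:ℝ) < (2:ℝ)^(200:ℕ) by positivity) hcast
      calc (200:ℝ) = Real.logb 2 ((2:ℝ)^(200:ℕ)) := by
            rw [Real.logb_pow]; simp [Real.logb_self_eq_one]
        _ ≤ Real.logb 2 (n:ℝ) := this
    clear hbig hcrude hC2400
    have hs20 : 20 ≤ s := by
      by_contra h
      push_neg at h
      nlinarith only [hs2, hs0, hL200, h]
    have hv14 : 14 ≤ v := by
      by_contra h
      push_neg at h
      nlinarith only [hv2, hv0, hL200, h]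
    have hsL1 : s + 1 ≤ L := by
      have h := Real.sqrt_le_sqrt (show 2*L ≤ (L-1)^2 by nlinarith only [hL200])
      rw [hsdef, Real.sqrt_sq (by linarith only [hL200])] at h
      linarith only [h]
    have h2t : 2*t ≤ (n:ℝ) := by
      have h := Real.rpow_le_rpow_left_iff (show (1:ℝ)<2 by norm_num) |>.mpr hsL1
      rw [Real.rpow_add (by norm_num), Real.rpow_one, hnL, htdef] at h
      linarith only [h]
    have ht4 : (4:ℝ) ≤ t := by
      rw [← htdef]
      calc (4:ℝ) = (2:ℝ)^(2:ℝ) := by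
            rw [show (2:ℝ) = ((2:ℕ):ℝ) by norm_num, Real.rpow_natCast]; norm_num
        _ ≤ (2:ℝ)^s := Real.rpow_le_rpow_left_iff (by norm_num : (1:ℝ)<2) |>.mpr
            (by linarith only [hs20])
    obtain ⟨m, hmdef⟩ : ∃ m : ℕ, ⌈(n:ℝ)/t⌉₊ = m := ⟨_, rfl⟩
    have hrecn := hrec n hn2
    rw [hLdef, hsdef, htdef, hmdef] at hrecn
    have hmlb : (n:ℝ)/t ≤ m := by rw [← hmdef]; exact Nat.le_ceil _
    have hm2 : 2 ≤ m := by
      have h2' : (2:ℝ) ≤ (n:ℝ)/t := by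
        rw [le_div_iff₀ ht0]; linarith only [h2t]
      have : (2:ℝ) ≤ (m:ℝ) := le_trans h2' hmlb
      exact_mod_cast this
    have hmub : (m:ℝ) < (n:ℝ)/t + 1 := by
      rw [← hmdef]
      exact Nat.ceil_lt_add_one (div_nonneg hn0.le ht0.le)
    have hm0 : (0:ℝ) < m := by exact_mod_cast (show 0 < m by omega)
    have hmt : (m:ℝ) * t ≤ 2 * n := by
      have h1t : (1:ℝ) ≤ (n:ℝ)/t := by
        rw [le_div_iff₀ ht0]; linarith only [h2t, ht4]
      have hm2t : (m:ℝ) ≤ 2*((n:ℝ)/t) := by linarith only [hmub, h1t]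
      have hnt : (n:ℝ)/t*t = n := div_mul_cancel₀ _ (ne_of_gt ht0)
      calc (m:ℝ)*t ≤ (2*((n:ℝ)/t))*t := mul_le_mul_of_nonneg_right hm2t (le_of_lt ht0)
        _ = 2*n := by rw [mul_assoc, hnt]
    have hmn : m < n := by
      have h4m : (m:ℝ)*4 ≤ 2*n := by
        linarith only [mul_le_mul_of_nonneg_left ht4 hm0.le, hmt]
      have hn4 : (4:ℝ) ≤ n := by linarith only [h2t, ht4]
      have : (m:ℝ) < (n:ℝ) := by linarith only [h4m, hn4]
      exact_mod_cast this
    have hWm := ih m hmn hm2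
    obtain ⟨L', hL'def⟩ : ∃ x, Real.logb 2 (m:ℝ) = x := ⟨_, rfl⟩
    obtain ⟨s', hs'def⟩ : ∃ x, Real.sqrt (2*L') = x := ⟨_, rfl⟩
    obtain ⟨t', ht'def⟩ : ∃ x, (2:ℝ)^s' = x := ⟨_, rfl⟩
    obtain ⟨u, hudef⟩ : ∃ x, Real.sqrt L' = x := ⟨_, rfl⟩
    rw [hL'def, hs'def, ht'def, hudef] at hWm
    have hL'1 : 1 ≤ L' := by
      rw [← hL'def]
      have := Real.logb_le_logb_of_le (show (1:ℝ)<2 by norm_num) (show (0:ℝ)<2 by norm_num)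
        (show (2:ℝ) ≤ m by exact_mod_cast hm2)
      simpa using this
    have hs'0 : 0 ≤ s' := by rw [← hs'def]; exact Real.sqrt_nonneg _
    have ht'0 : (0:ℝ) < t' := by rw [← ht'def]; exact Real.rpow_pos_of_pos (by norm_num) _
    have hu2 : u^2 = L' := by
      rw [← hudef]; exact Real.sq_sqrt (by linarith only [hL'1])
    have hu0 : 0 ≤ u := by rw [← hudef]; exact Real.sqrt_nonneg _
    -- L' ≤ 1 + L - s
    have hlogt : Real.logb 2 t = s := by
      rw [← htdef]; exact Real.logb_rpow (by norm_num) (by norm_num)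
    have hL'ub : L' ≤ 1 + L - s := by
      have hmle : (m:ℝ) ≤ 2*(n:ℝ)/t := by
        rw [le_div_iff₀ ht0]; linarith only [hmt]
      have hlb := Real.logb_le_logb_of_le (show (1:ℝ)<2 by norm_num) hm0 hmle
      rw [hL'def] at hlb
      have hcomp : Real.logb 2 (2*(n:ℝ)/t) = 1 + L - s := by
        rw [Real.logb_div (by positivity) (ne_of_gt ht0),
          Real.logb_mul (by norm_num) (ne_of_gt hn0), hlogt, hLdef]
        simp [Real.logb_self_eq_one]
      rw [hcomp] at hlb
      exact hlb
    have hule : u ≤ v := by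
      nlinarith only [hL'ub, hs20, hu2, hv2, hu0, hv0]
    have ha0 : (0:ℝ) < s - 1 := by linarith only [hs20]
    have hane : s - 1 ≠ 0 := ne_of_gt ha0
    have hvne : v ≠ 0 := by
      intro h; rw [h] at hv14; norm_num at hv14
    have hdel0 : (0:ℝ) ≤ 1/(2*(s-1)) :=
      le_of_lt (one_div_pos.mpr (by linarith only [ha0]))
    -- s' ≤ (s-1) + 1/(2*(s-1))
    have hs'ub : s' ≤ (s-1) + 1/(2*(s-1)) := by
      have h1 : 2*L' ≤ (s-1)^2 + 1 := by linarith only [hL'ub, hs2]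
      have hd : (s-1) * (1/(2*(s-1))) = 1/2 := by field_simp
      have h2 : (s-1)^2 + 1 ≤ ((s-1) + 1/(2*(s-1)))^2 := by
        nlinarith only [sq_nonneg (1/(2*(s-1))), hd]
      rw [← hs'def]
      calc Real.sqrt (2*L') ≤ Real.sqrt (((s-1) + 1/(2*(s-1)))^2) :=
            Real.sqrt_le_sqrt (le_trans h1 h2)
        _ = (s-1) + 1/(2*(s-1)) := Real.sqrt_sq (by linarith only [ha0, hdel0])
    have hdel1 : 1/(2*(s-1)) ≤ 1 := by
      rw [div_le_one (by linarith only [ha0])]; linarith only [ha0, hs20]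
    have ht2' : 2*t' ≤ t*(1 + 1/(2*(s-1))) := by
      have hmono' : (2:ℝ)^(s'+1) ≤ (2:ℝ)^(s + 1/(2*(s-1))) :=
        Real.rpow_le_rpow_left_iff (by norm_num : (1:ℝ)<2) |>.mpr
          (by linarith only [hs'ub])
      rw [Real.rpow_add (by norm_num), Real.rpow_add (by norm_num), Real.rpow_one,
        ht'def, htdef] at hmono'
      have h2d := two_rpow_le_one_add hdel0 hdel1
      linarith only [hmono', mul_le_mul_of_nonneg_left h2d ht0.le]
    -- key polynomial inequality
    have hv2s : 2*v^2 = s^2 := by linarith only [hv2, hs2]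
    have hvs : 100*v ≤ 71*s := by
      by_contra h
      push_neg at h
      have hs0' : (0:ℝ) < 71*s := by linarith only [hs20]
      have hvpos : (0:ℝ) < 100*v := by linarith only [h, hs0']
      have P1 := mul_lt_mul_of_pos_left h hs0'
      have P2 := mul_lt_mul_of_pos_right h hvpos
      nlinarith only [P1, P2, hv2s]
    have hkey : C*v^2 + 2*(s-1)*v*c ≤ C*(s-1)^2 := by
      have h71 : c*(s-1)*(100*v) ≤ c*(s-1)*(71*s) :=
        mul_le_mul_of_nonneg_left hvs (mul_nonneg hc0.le ha0.le)
      have F1 : (0:ℝ) ≤ (C - 4*c) * (s^2/2 - 2*s + 1) :=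
        mul_nonneg (by linarith only [hC4])
          (by nlinarith only [hs20, sq_nonneg (s-20)])
      have F3 : (0:ℝ) ≤ c * (58*s^2 - 658*s + 400) :=
        mul_nonneg hc0.le (by nlinarith only [hs20, sq_nonneg (s-20)])
      have F4 : C*(2*v^2) = C*s^2 := by rw [hv2s]
      nlinarith only [h71, F1, F3, F4]
    have h1 : s - 1 ≤ 2*v*(v-u) := by
      nlinarith only [sq_nonneg (v-u), hu2, hv2, hL'ub]
    have hgoal' : 4*(s-1)*v*(C*u) + 2*v*(C*u) + 4*(s-1)*v*c ≤ 4*(s-1)*v*(C*v) := by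
      have P1 := mul_le_mul_of_nonneg_left h1
        (by nlinarith only [mul_pos ha0 hC0] : (0:ℝ) ≤ 2*(s-1)*C)
      have P2 := mul_le_mul_of_nonneg_left hule
        (by nlinarith only [mul_nonneg hv0 hC0.le] : (0:ℝ) ≤ 2*v*C)
      nlinarith only [P1, P2, hkey]
    have hav : (0:ℝ) < 4*(s-1)*v := by
      nlinarith only [mul_pos ha0 (show (0:ℝ) < v by linarith only [hv14])]
    have hfin : C*(1+1/(2*(s-1)))*u + c ≤ C*v := by
      rw [show C*(1+1/(2*(s-1)))*u + c
          = (4*(s-1)*v*(C*u) + 2*v*(C*u) + 4*(s-1)*v*c)/(4*(s-1)*v) by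
        field_simp; ring]
      rw [div_le_iff₀ hav]
      nlinarith only [hgoal']
    -- assemble
    have hCu0 : (0:ℝ) ≤ C*u := mul_nonneg hC0.le hu0
    have step1 : W n ≤ t*(1 + 1/(2*(s-1)))*(C*u) + c*t := by
      have h := mul_le_mul_of_nonneg_right ht2' hCu0
      linarith only [hrecn, hWm, h]
    calc W n ≤ t*(1 + 1/(2*(s-1)))*(C*u) + c*t := step1
      _ = t*(C*(1+1/(2*(s-1)))*u + c) := by ring
      _ ≤ t*(C*v) := mul_le_mul_of_nonneg_left hfin ht0.le
      _ = C * t * v := by ring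
end
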